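/- arXiv:2011.08132 — 7 statements merged into one kernel-verified Lean document; each statement's English description precedes it below -/
import Mathlib

section
/- Every Hermitian tensor is a real linear combination of rank-1 Hermitian tensors: for every Hermitian tensor H of format (n_1,…,n_m) there exist an integer r ≥ 0, real scalars λ_1,…,λ_r, and vectors u_i^j ∈ ℂ^{n_j} (i = 1,…,r, j = 1,…,m) such that H = Σ_{i=1}^r λ_i [u_i^1,…,u_i^m]_⊗h. -/
open Finset

noncomputable def bco : Fin 4 → ℂ := ![-(1+Complex.I)/2, -(1+Complex.I)/2, 1/2, Complex.I/2]

noncomputable def bvec {N : ℕ} (a b : Fin N) : Fin 4 → Fin N → ℂ :=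
  ![fun x => if x = a then 1 else 0,
    fun x => if x = b then 1 else 0,
    fun x => (if x = a then 1 else 0) + (if x = b then 1 else 0),
    fun x => (if x = a then 1 else 0) + Complex.I * (if x = b then 1 else 0)]

lemma key {N : ℕ} (a b x y : Fin N) :
    ∑ t : Fin 4, bco t * (bvec a b t x * (starRingEnd ℂ) (bvec a b t y))
      = if x = a ∧ y = b then 1 else 0 := by
  have hI3 : (Complex.I : ℂ) ^ 3 = -Complex.I := by rw [pow_succ, Complex.I_sq]; ring
  simp only [Fin.sum_univ_four, bco, bvec, Matrix.cons_val_zero, Matrix.cons_val_one,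
    Matrix.head_cons, Matrix.cons_val_two, Matrix.tail_cons, Matrix.cons_val_three]
  rcases eq_or_ne a b with hab | hab
  · subst hab
    by_cases hxa : x = a <;> by_cases hya : y = a <;>
      simp [hxa, hya, map_add, map_mul, Complex.conj_I] <;>
      (try ring_nf) <;> (try simp only [hI3, Complex.I_sq]) <;> (try ring_nf)
  · by_cases hxa : x = a <;> by_cases hxb : x = b <;> by_cases hya : y = a <;> by_cases hyb : y = b <;>
      simp_all [map_add, map_mul, Complex.conj_I, Ne.symm hab] <;>
      (try ring_nf) <;> (try simp only [hI3, Complex.I_sq]) <;> (try ring_nf) <;>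
      (try simp only [Complex.I_sq]) <;> (try norm_num)

lemma complex_decomp (m : ℕ) (n : Fin m → ℕ)
    (H : ((k : Fin m) → Fin (n k)) → ((k : Fin m) → Fin (n k)) → ℂ)
    (I J : (k : Fin m) → Fin (n k)) :
    H I J = ∑ p : ((((k : Fin m) → Fin (n k)) × ((k : Fin m) → Fin (n k))) × (Fin m → Fin 4)),
        (H p.1.1 p.1.2 * ∏ k, bco (p.2 k)) *
          ∏ k, bvec (p.1.1 k) (p.1.2 k) (p.2 k) (I k) *
            (starRingEnd ℂ) (bvec (p.1.1 k) (p.1.2 k) (p.2 k) (J k)) := by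
  classical
  rw [Fintype.sum_prod_type]
  have inner : ∀ q : (((k : Fin m) → Fin (n k)) × ((k : Fin m) → Fin (n k))),
      ∑ T : Fin m → Fin 4, (H q.1 q.2 * ∏ k, bco (T k)) *
          ∏ k, bvec (q.1 k) (q.2 k) (T k) (I k) *
            (starRingEnd ℂ) (bvec (q.1 k) (q.2 k) (T k) (J k))
        = H q.1 q.2 * if I = q.1 ∧ J = q.2 then 1 else 0 := by
    intro q
    have h1 : ∀ T : Fin m → Fin 4,
        (H q.1 q.2 * ∏ k, bco (T k)) *
          ∏ k, bvec (q.1 k) (q.2 k) (T k) (I k) *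
            (starRingEnd ℂ) (bvec (q.1 k) (q.2 k) (T k) (J k))
        = H q.1 q.2 * ∏ k, bco (T k) * (bvec (q.1 k) (q.2 k) (T k) (I k) *
            (starRingEnd ℂ) (bvec (q.1 k) (q.2 k) (T k) (J k))) := by
      intro T
      rw [mul_assoc, ← Finset.prod_mul_distrib]
    simp only [h1]
    rw [← Finset.mul_sum]
    congr 1
    rw [← Fintype.piFinset_univ,
      ← Finset.prod_univ_sum (fun _ : Fin m => (Finset.univ : Finset (Fin 4)))
        (fun k t => bco t * (bvec (q.1 k) (q.2 k) t (I k) *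
          (starRingEnd ℂ) (bvec (q.1 k) (q.2 k) t (J k))))]
    simp only [key]
    rw [Finset.prod_boole]
    have hiff : (∀ k, I k = q.1 k ∧ J k = q.2 k) ↔ (I = q.1 ∧ J = q.2) := by
      simp [funext_iff, forall_and]
    simp [hiff]
  simp only [inner]
  simp only [mul_ite, mul_one, mul_zero]
  rw [Fintype.sum_prod_type]
  simp [ite_and]

/-- Every Hermitian tensor of format `(n 0, …, n (m-1))` is a real linear combination
of rank-1 Hermitian tensors. -/
theorem every_hermitian_tensor_has_hermitian_decomposition
    (m : ℕ) (hm : 1 ≤ m) (n : Fin m → ℕ) (hn : ∀ k, 1 ≤ n k)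
    (H : ((k : Fin m) → Fin (n k)) → ((k : Fin m) → Fin (n k)) → ℂ)
    (hH : ∀ I J, H I J = (starRingEnd ℂ) (H J I)) :
    ∃ (r : ℕ) (lam : Fin r → ℝ) (u : (i : Fin r) → (k : Fin m) → Fin (n k) → ℂ),
      ∀ I J, H I J =
        ∑ i, (lam i : ℂ) * ∏ k, u i k (I k) * (starRingEnd ℂ) (u i k (J k)) := by
  classical
  set ι := ((((k : Fin m) → Fin (n k)) × ((k : Fin m) → Fin (n k))) × (Fin m → Fin 4)) with hι
  set e : Fin (Fintype.card ι) ≃ ι := (Fintype.equivFin ι).symm with he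
  set mu : Fin (Fintype.card ι) → ℂ :=
    fun i => H (e i).1.1 (e i).1.2 * ∏ k, bco ((e i).2 k) with hmu
  set u : (i : Fin (Fintype.card ι)) → (k : Fin m) → Fin (n k) → ℂ :=
    fun i k => bvec ((e i).1.1 k) ((e i).1.2 k) ((e i).2 k) with hu
  refine ⟨Fintype.card ι, fun i => (mu i).re, u, ?_⟩
  intro I J
  set R : Fin (Fintype.card ι) → ℂ :=
    fun i => ∏ k, u i k (I k) * (starRingEnd ℂ) (u i k (J k)) with hR
  have h1 : H I J = ∑ i, mu i * R i := by
    rw [complex_decomp m n H I J]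
    exact (Equiv.sum_comp e (fun p : ι =>
      (H p.1.1 p.1.2 * ∏ k, bco (p.2 k)) *
        ∏ k, bvec (p.1.1 k) (p.1.2 k) (p.2 k) (I k) *
          (starRingEnd ℂ) (bvec (p.1.1 k) (p.1.2 k) (p.2 k) (J k)))).symm
  have h2 : H I J = ∑ i, (starRingEnd ℂ) (mu i) * R i := by
    have h1' : H J I = ∑ i, mu i * ∏ k, u i k (J k) * (starRingEnd ℂ) (u i k (I k)) := by
      rw [complex_decomp m n H J I]
      exact (Equiv.sum_comp e (fun p : ι =>
        (H p.1.1 p.1.2 * ∏ k, bco (p.2 k)) *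
          ∏ k, bvec (p.1.1 k) (p.1.2 k) (p.2 k) (J k) *
            (starRingEnd ℂ) (bvec (p.1.1 k) (p.1.2 k) (p.2 k) (I k)))).symm
    rw [hH I J, h1', map_sum]
    refine Finset.sum_congr rfl fun i _ => ?_
    rw [map_mul, map_prod]
    congr 1
    refine Finset.prod_congr rfl fun k _ => ?_
    rw [map_mul, RingHomInvPair.comp_apply_eq]
    ring
  calc H I J = (∑ i, mu i * R i + ∑ i, (starRingEnd ℂ) (mu i) * R i) / 2 := by
        rw [← h1, ← h2]; ring
    _ = ∑ i, ((mu i).re : ℂ) * R i := by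
        rw [← Finset.sum_add_distrib, Finset.sum_div]
        refine Finset.sum_congr rfl fun i _ => ?_
        rw [← add_mul, Complex.add_conj]
        push_cast
        ring
end

section
/- A Hermitian tensor H of format (n_1,…,n_m) is separable if and only if there exist an integer s ≥ 0 and positive semidefinite Hermitian matrices B_k^i ∈ ℂ^{n_k×n_k} (i = 1,…,s, k = 1,…,m) such that H_{IJ} = Σ_{i=1}^s ∏_{k=1}^m (B_k^i)_{i_k j_k} for all multi-indices I = (i_1,…,i_m), J = (j_1,…,j_m). -/
open scoped ComplexOrder

/-- A Hermitian tensor is separable iff it admits a decomposition as a sum of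
Kronecker-type products of positive semidefinite Hermitian matrices. -/
theorem separable_iff_psd_matrix_decomposition
    (m : ℕ) (hm : 1 ≤ m) (n : Fin m → ℕ) (hn : ∀ k, 1 ≤ n k)
    (H : ((k : Fin m) → Fin (n k)) → ((k : Fin m) → Fin (n k)) → ℂ)
    (hH : ∀ I J, H I J = (starRingEnd ℂ) (H J I)) :
    (∃ (r : ℕ) (u : (i : Fin r) → (k : Fin m) → Fin (n k) → ℂ),
        ∀ I J, H I J = ∑ i, ∏ k, u i k (I k) * (starRingEnd ℂ) (u i k (J k)))
      ↔
    (∃ (s : ℕ) (B : (i : Fin s) → (k : Fin m) → Matrix (Fin (n k)) (Fin (n k)) ℂ),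
        (∀ i k, (B i k).PosSemidef) ∧
        ∀ I J, H I J = ∑ i, ∏ k, B i k (I k) (J k)) := by
  constructor
  · rintro ⟨r, u, hu⟩
    refine ⟨r, fun i k => fun a b => u i k a * (starRingEnd ℂ) (u i k b), ?_, hu⟩
    intro i k
    refine Matrix.PosSemidef.of_dotProduct_mulVec_nonneg ?_ ?_
    · ext a b
      show star (u i k b * (starRingEnd ℂ) (u i k a)) = _
      simp [mul_comm]
    · intro x
      show 0 ≤ dotProduct (star x)
        (Matrix.mulVec (fun a b => u i k a * (starRingEnd ℂ) (u i k b)) x)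
      have hz : dotProduct (star x)
          (Matrix.mulVec (fun a b => u i k a * (starRingEnd ℂ) (u i k b)) x)
          = (∑ a, star (x a) * u i k a) * star (∑ a, star (x a) * u i k a) := by
        simp only [dotProduct, Matrix.mulVec, Pi.star_apply, starRingEnd_apply,
          star_sum, star_mul, star_star, Finset.sum_mul, Finset.mul_sum]
        rw [Finset.sum_comm]
        refine Finset.sum_congr rfl fun a _ => Finset.sum_congr rfl fun b _ => ?_
        ring
      rw [hz]
      exact mul_star_self_nonneg _
  · rintro ⟨s, B, hB, hdec⟩
    -- use the square root of each PSD matrix to get a rank-one decomposition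
    open scoped MatrixOrder in
    set S : (i : Fin s) → (k : Fin m) → Matrix (Fin (n k)) (Fin (n k)) ℂ :=
      fun i k => CFC.sqrt (B i k) with hS
    open scoped MatrixOrder in
    have hSherm : ∀ i k, (S i k).IsHermitian := fun i k => (Matrix.nonneg_iff_posSemidef.mp (CFC.sqrt_nonneg (B i k))).1
    open scoped MatrixOrder in
    have hSmul : ∀ i k, S i k * S i k = B i k := fun i k => CFC.sqrt_mul_sqrt_self (B i k) (hB i k).nonneg
    -- entrywise: B i k a b = ∑ j, S i k a j * conj (S i k b j)
    have hentry : ∀ i k a b, B i k a b = ∑ j, S i k a j * (starRingEnd ℂ) (S i k b j) := by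
      intro i k a b
      have := congrArg (fun M => M a b) (hSmul i k)
      simp only [Matrix.mul_apply] at this
      rw [← this]
      refine Finset.sum_congr rfl fun j _ => ?_
      congr 1
      have := congrArg (fun M => M j b) (hSherm i k)
      simpa [Matrix.conjTranspose_apply] using this.symm
    -- index type for the rank-one decomposition
    have key : ∀ I J, H I J =
        ∑ p : Fin s × ((k : Fin m) → Fin (n k)),
          ∏ k, S p.1 k (I k) (p.2 k) * (starRingEnd ℂ) (S p.1 k (J k) (p.2 k)) := by
      intro I J
      rw [hdec I J, Fintype.sum_prod_type]
      refine Finset.sum_congr rfl fun i _ => ?_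
      rw [← Fintype.prod_sum (fun k j => S i k (I k) j * (starRingEnd ℂ) (S i k (J k) j))]
      exact Finset.prod_congr rfl fun k _ => hentry i k (I k) (J k)
    -- transport to a `Fin r` index
    set ι := Fin s × ((k : Fin m) → Fin (n k))
    let e : ι ≃ Fin (Fintype.card ι) := Fintype.equivFin ι
    refine ⟨Fintype.card ι, fun j k a => S (e.symm j).1 k a ((e.symm j).2 k), fun I J => ?_⟩
    rw [key I J]
    exact Fintype.sum_equiv e _ _ (fun p => by simp)
end

section
/- The separable cone and the psd cone of Hermitian tensors are dual to each other: (a) a Hermitian tensor A of format (n_1,…,n_m) satisfies Re⟨A,B⟩ ≥ 0 for every separable Hermitian tensor B if and only if A is positive semidefinite; (b) a Hermitian tensor B satisfies Re⟨A,B⟩ ≥ 0 for every positive semidefinite Hermitian tensor A if and only if B is separable. -/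
namespace HermitianTensorDuality

variable {m : ℕ} {n : Fin m → ℕ}

/-- A complex array indexed by pairs of multi-indices is Hermitian. -/
def IsHerm (H : ((k : Fin m) → Fin (n k)) → ((k : Fin m) → Fin (n k)) → ℂ) : Prop :=
  ∀ I J, H I J = (starRingEnd ℂ) (H J I)

/-- The rank-1 Hermitian tensor `[z_1, …, z_m]_⊗h`. -/
def rankOne (z : (k : Fin m) → Fin (n k) → ℂ) :
    ((k : Fin m) → Fin (n k)) → ((k : Fin m) → Fin (n k)) → ℂ :=
  fun I J => ∏ k, z k (I k) * (starRingEnd ℂ) (z k (J k))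

/-- A Hermitian tensor is separable if it is a sum of rank-1 Hermitian tensors. -/
def IsSep (H : ((k : Fin m) → Fin (n k)) → ((k : Fin m) → Fin (n k)) → ℂ) : Prop :=
  ∃ (r : ℕ) (u : (i : Fin r) → (k : Fin m) → Fin (n k) → ℂ),
    ∀ I J, H I J = ∑ i, rankOne (u i) I J

/-- The inner product `⟨A,B⟩ = ∑_{I,J} A_{IJ} conj(B_{IJ})`. -/
noncomputable def ip (A B : ((k : Fin m) → Fin (n k)) → ((k : Fin m) → Fin (n k)) → ℂ) : ℂ :=
  ∑ I, ∑ J, A I J * (starRingEnd ℂ) (B I J)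

/-- A Hermitian tensor is positive semidefinite. -/
noncomputable def IsPsd (H : ((k : Fin m) → Fin (n k)) → ((k : Fin m) → Fin (n k)) → ℂ) : Prop :=
  ∀ z : (k : Fin m) → Fin (n k) → ℂ, 0 ≤ (ip H (rankOne z)).re

abbrev Tens (m : ℕ) (n : Fin m → ℕ) :=
  ((k : Fin m) → Fin (n k)) → ((k : Fin m) → Fin (n k)) → ℂ

lemma ip_comm (A B : Tens m n) : ip B A = (starRingEnd ℂ) (ip A B) := by
  simp only [ip, map_sum, map_mul, RingHomCompTriple.comp_apply, RingHom.id_apply,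
    Complex.conj_conj]
  congr 1; ext I; congr 1; ext J; ring

lemma ip_re_comm (A B : Tens m n) : (ip B A).re = (ip A B).re := by
  rw [ip_comm, Complex.conj_re]

lemma rankOne_herm (z : (k : Fin m) → Fin (n k) → ℂ) : IsHerm (rankOne z) := by
  intro I J
  simp only [rankOne, map_prod, map_mul, Complex.conj_conj]
  congr 1; ext k; ring

lemma rankOne_sep (z : (k : Fin m) → Fin (n k) → ℂ) : IsSep (rankOne z) :=
  ⟨1, fun _ => z, by simp⟩

lemma sep_herm {B : Tens m n} (hB : IsSep B) : IsHerm B := by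
  obtain ⟨r, u, h⟩ := hB
  intro I J
  rw [h, h, map_sum]
  exact Finset.sum_congr rfl fun i _ => rankOne_herm (u i) I J

lemma ip_sum_right {r : ℕ} (A : Tens m n) (f : Fin r → Tens m n) :
    ip A (fun I J => ∑ i, f i I J) = ∑ i, ip A (f i) := by
  simp only [ip, map_sum, Finset.mul_sum]
  trans ∑ I, ∑ i, ∑ J, A I J * (starRingEnd ℂ) (f i I J)
  · exact Finset.sum_congr rfl fun I _ => Finset.sum_comm
  · exact Finset.sum_comm

lemma ip_sep_re {A B : Tens m n} (hA : IsPsd A) (hB : IsSep B) : 0 ≤ (ip A B).re := by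
  obtain ⟨r, u, h⟩ := hB
  have : B = fun I J => ∑ i, rankOne (u i) I J := by funext I J; exact h I J
  rw [this, ip_sum_right, Complex.re_sum]
  exact Finset.sum_nonneg fun i _ => hA (u i)

lemma sep_zero : IsSep (0 : Tens m n) :=
  ⟨0, Fin.elim0, by simp⟩

lemma sep_add {B₁ B₂ : Tens m n} (h₁ : IsSep B₁) (h₂ : IsSep B₂) : IsSep (B₁ + B₂) := by
  obtain ⟨r₁, u, hu⟩ := h₁
  obtain ⟨r₂, v, hv⟩ := h₂
  refine ⟨r₁ + r₂, Fin.addCases u v, fun I J => ?_⟩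
  rw [Fin.sum_univ_add]
  simp only [Fin.addCases_left, Fin.addCases_right]
  rw [← hu I J, ← hv I J]
  rfl

lemma rankOne_smul (hm : 1 ≤ m) {t : ℝ} (ht : 0 ≤ t) (z : (k : Fin m) → Fin (n k) → ℂ) :
    ∀ I J, (t : ℂ) * rankOne z I J
      = rankOne (Function.update z ⟨0, hm⟩ ((Real.sqrt t : ℂ) • z ⟨0, hm⟩)) I J := by
  intro I J
  set k0 : Fin m := ⟨0, hm⟩
  set z' := Function.update z k0 ((Real.sqrt t : ℂ) • z k0) with hz'
  set g : Fin m → ℂ := fun k => z k (I k) * (starRingEnd ℂ) (z k (J k)) with hg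
  set g' : Fin m → ℂ := fun k => z' k (I k) * (starRingEnd ℂ) (z' k (J k)) with hg'
  have h1 : rankOne z I J = g k0 * ∏ k ∈ Finset.univ.erase k0, g k :=
    (Finset.mul_prod_erase _ _ (Finset.mem_univ k0)).symm
  have h2 : rankOne z' I J = g' k0 * ∏ k ∈ Finset.univ.erase k0, g' k :=
    (Finset.mul_prod_erase _ _ (Finset.mem_univ k0)).symm
  have h3 : ∀ k ∈ Finset.univ.erase k0, g' k = g k := by
    intro k hk
    have : k ≠ k0 := (Finset.mem_erase.mp hk).1
    simp only [hg', hg, hz', Function.update_of_ne this]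
  have h4 : g' k0 = (t : ℂ) * g k0 := by
    simp only [hg', hg, hz', Function.update_self, Pi.smul_apply, smul_eq_mul, map_mul,
      Complex.conj_ofReal]
    have hs : ((Real.sqrt t : ℝ) : ℂ) * ((Real.sqrt t : ℝ) : ℂ) = (t : ℂ) := by
      rw [← Complex.ofReal_mul, Real.mul_self_sqrt ht]
    linear_combination (z k0 (I k0) * (starRingEnd ℂ) (z k0 (J k0))) * hs
  rw [show rankOne z I J = g k0 * ∏ k ∈ Finset.univ.erase k0, g k from h1, h2,
    Finset.prod_congr rfl h3, h4]
  ring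

lemma sep_smul (hm : 1 ≤ m) {t : ℝ} (ht : 0 ≤ t) {B : Tens m n} (hB : IsSep B) :
    IsSep (t • B) := by
  obtain ⟨r, u, hu⟩ := hB
  refine ⟨r, fun i => Function.update (u i) ⟨0, hm⟩ ((Real.sqrt t : ℂ) • u i ⟨0, hm⟩),
    fun I J => ?_⟩
  have : (t • B) I J = (t : ℂ) * B I J := by
    simp [Complex.real_smul]
  rw [this, hu, Finset.mul_sum]
  exact Finset.sum_congr rfl fun i _ => rankOne_smul hm ht (u i) I J

lemma sep_convex (hm : 1 ≤ m) : Convex ℝ {B : Tens m n | IsSep B} := by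
  intro x hx y hy a b ha hb _
  exact sep_add (sep_smul hm ha hx) (sep_smul hm hb hy)

/-- The real-linear "trace" functional. -/
noncomputable def Tl : Tens m n →ₗ[ℝ] ℝ where
  toFun x := (∑ I, x I I).re
  map_add' x y := by simp [Complex.add_re, Finset.sum_add_distrib]
  map_smul' t x := by
    simp only [Pi.smul_apply, RingHom.id_apply, smul_eq_mul, Complex.real_smul,
      ← Finset.mul_sum, Complex.re_ofReal_mul]

lemma Tl_apply (x : Tens m n) : Tl x = (∑ I, x I I).re := rfl

/-- Normalized product states. -/
def P (m : ℕ) (n : Fin m → ℕ) : Set ((k : Fin m) → Fin (n k) → ℂ) :=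
  {u | ∀ k, ∑ j, Complex.normSq (u k j) = 1}

/-- The set of normalized rank one tensors. -/
def S (m : ℕ) (n : Fin m → ℕ) : Set (Tens m n) := rankOne '' P m n

lemma Tl_rankOne (z : (k : Fin m) → Fin (n k) → ℂ) :
    Tl (rankOne z) = ∏ k, ∑ j, Complex.normSq (z k j) := by
  have h1 : ∀ I : (k : Fin m) → Fin (n k),
      rankOne z I I = ((∏ k, Complex.normSq (z k (I k)) : ℝ) : ℂ) := by
    intro I
    simp [rankOne, Complex.mul_conj]
  rw [Tl_apply]
  simp only [h1]
  rw [← Complex.ofReal_sum, Complex.ofReal_re, Finset.prod_univ_sum, Fintype.piFinset_univ]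

lemma Tl_S {s : Tens m n} (hs : s ∈ S m n) : Tl s = 1 := by
  obtain ⟨z, hz, rfl⟩ := hs
  rw [Tl_rankOne]
  exact Finset.prod_eq_one fun k _ => hz k

lemma S_nonempty (hn : ∀ k, 1 ≤ n k) : (S m n).Nonempty := by
  refine ⟨rankOne (fun k j => if j = ⟨0, hn k⟩ then 1 else 0),
    fun k j => if j = ⟨0, hn k⟩ then 1 else 0, fun k => ?_, rfl⟩
  rw [Finset.sum_eq_single ⟨0, hn k⟩]
  · simp
  · intro j _ hj; simp [hj]
  · simp

lemma S_sep {s : Tens m n} (hs : s ∈ S m n) : IsSep s := by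
  obtain ⟨z, _, rfl⟩ := hs; exact rankOne_sep z

/-- Every rank one tensor is a nonnegative multiple of a normalized one. -/
lemma rankOne_normalize (hn : ∀ k, 1 ≤ n k) (z : (k : Fin m) → Fin (n k) → ℂ) :
    ∃ s ∈ S m n, rankOne z = (∏ k, ∑ j, Complex.normSq (z k j)) • s := by
  by_cases hz : ∀ k, z k ≠ 0
  · set N : Fin m → ℝ := fun k => Real.sqrt (∑ j, Complex.normSq (z k j)) with hN
    have hNpos : ∀ k, 0 < N k := by
      intro k
      obtain ⟨j, hj⟩ := Function.ne_iff.mp (hz k)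
      exact Real.sqrt_pos.mpr (Finset.sum_pos' (fun j _ => Complex.normSq_nonneg _)
        ⟨j, Finset.mem_univ j, Complex.normSq_pos.mpr hj⟩)
    have hNk2 : ∀ k, ∑ j, Complex.normSq (z k j) = N k * N k := by
      intro k
      rw [hN, Real.mul_self_sqrt]
      exact Finset.sum_nonneg fun j _ => Complex.normSq_nonneg _
    set w : (k : Fin m) → Fin (n k) → ℂ := fun k => ((N k)⁻¹ : ℝ) • z k with hw
    have hwP : w ∈ P m n := by
      intro k
      have h1 : ∀ j, Complex.normSq (w k j)
          = (N k)⁻¹ * (N k)⁻¹ * Complex.normSq (z k j) := by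
        intro j
        simp only [hw, Pi.smul_apply, Complex.real_smul, Complex.normSq_mul,
          Complex.normSq_ofReal]
      rw [Finset.sum_congr rfl fun j _ => h1 j, ← Finset.mul_sum, hNk2 k]
      field_simp
      exact div_self (hNpos k).ne'
    refine ⟨rankOne w, ⟨w, hwP, rfl⟩, ?_⟩
    funext I J
    have h2 : rankOne w I J = ((∏ k, (N k)⁻¹ * (N k)⁻¹ : ℝ) : ℂ) * rankOne z I J := by
      rw [rankOne, rankOne, Complex.ofReal_prod, ← Finset.prod_mul_distrib]
      refine Finset.prod_congr rfl fun k _ => ?_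
      simp only [hw, Pi.smul_apply, Complex.real_smul, map_mul, Complex.conj_ofReal,
        Complex.ofReal_mul]
      ring
    show rankOne z I J = ((∏ k, ∑ j, Complex.normSq (z k j) : ℝ) : ℂ) * rankOne w I J
    rw [h2, Finset.prod_congr rfl fun k _ => hNk2 k, Complex.ofReal_prod,
      Complex.ofReal_prod, ← mul_assoc, ← Finset.prod_mul_distrib]
    have h3 : ∀ k, ((N k * N k : ℝ) : ℂ) * (((N k)⁻¹ * (N k)⁻¹ : ℝ) : ℂ) = 1 := by
      intro k
      have hr : (N k * N k) * ((N k)⁻¹ * (N k)⁻¹) = (1 : ℝ) := by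
        field_simp
        exact div_self (hNpos k).ne'
      rw [← Complex.ofReal_mul, hr, Complex.ofReal_one]
    rw [Finset.prod_congr rfl fun k _ => h3 k, Finset.prod_const_one, one_mul]
  · push_neg at hz
    obtain ⟨k0, hk0⟩ := hz
    obtain ⟨s0, hs0⟩ := S_nonempty (m := m) hn
    refine ⟨s0, hs0, ?_⟩
    have hz0 : (∏ k, ∑ j, Complex.normSq (z k j)) = 0 := by
      apply Finset.prod_eq_zero (Finset.mem_univ k0)
      simp [hk0]
    have hr0 : rankOne z = 0 := by
      funext I J
      apply Finset.prod_eq_zero (Finset.mem_univ k0)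
      simp [hk0]
    rw [hz0, hr0, zero_smul]

lemma sep_decomp (hn : ∀ k, 1 ≤ n k) {B : Tens m n} (hB : IsSep B) :
    0 ≤ Tl B ∧ ∃ c ∈ convexHull ℝ (S m n), B = Tl B • c := by
  obtain ⟨r, u, hu⟩ := hB
  have hBeq : B = fun I J => ∑ i, rankOne (u i) I J := by funext I J; exact hu I J
  choose s hsS hseq using fun i => rankOne_normalize hn (u i)
  set lam : Fin r → ℝ := fun i => ∏ k, ∑ j, Complex.normSq (u i k j) with hlam
  have hlam0 : ∀ i, 0 ≤ lam i := fun i => Finset.prod_nonneg fun k _ =>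
    Finset.sum_nonneg fun j _ => Complex.normSq_nonneg _
  have hB2 : B = ∑ i, lam i • s i := by
    rw [hBeq]; funext I J
    rw [Finset.sum_apply, Finset.sum_apply]
    exact Finset.sum_congr rfl fun i _ => by rw [hseq i]
  have hTB : Tl B = ∑ i, lam i := by
    rw [hB2, map_sum]
    simp only [map_smul, smul_eq_mul]
    exact Finset.sum_congr rfl fun i _ => by rw [Tl_S (hsS i), mul_one]
  refine ⟨by rw [hTB]; exact Finset.sum_nonneg fun i _ => hlam0 i, ?_⟩
  by_cases hw : ∑ i, lam i = 0
  · obtain ⟨s0, hs0⟩ := S_nonempty hn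
    refine ⟨s0, subset_convexHull ℝ _ hs0, ?_⟩
    have hall : ∀ i, lam i = 0 := fun i =>
      (Finset.sum_eq_zero_iff_of_nonneg (fun i _ => hlam0 i)).mp hw i (Finset.mem_univ i)
    rw [hTB, hw, zero_smul, hB2]
    exact Finset.sum_eq_zero fun i _ => by rw [hall i, zero_smul]
  · have hwpos : 0 < ∑ i, lam i :=
      lt_of_le_of_ne (Finset.sum_nonneg fun i _ => hlam0 i) (Ne.symm hw)
    refine ⟨Finset.univ.centerMass lam s,
      Finset.centerMass_mem_convexHull _ (fun i _ => hlam0 i) hwpos (fun i _ => hsS i), ?_⟩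
    rw [hTB, Finset.centerMass, smul_smul, mul_inv_cancel₀ hw, one_smul, hB2]

lemma P_compact : IsCompact (P m n) := by
  have hPeq : P m n = Set.pi Set.univ
      (fun k => {v : Fin (n k) → ℂ | ∑ j, Complex.normSq (v j) = 1}) := by
    ext u; simp [P, Set.mem_pi]
  rw [hPeq]
  apply isCompact_univ_pi
  intro k
  have hcont : Continuous fun v : Fin (n k) → ℂ => ∑ j, Complex.normSq (v j) :=
    continuous_finset_sum _ fun j _ => Complex.continuous_normSq.comp (continuous_apply j)
  have hclosed : IsClosed {v : Fin (n k) → ℂ | ∑ j, Complex.normSq (v j) = 1} :=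
    isClosed_eq hcont continuous_const
  have hsub : {v : Fin (n k) → ℂ | ∑ j, Complex.normSq (v j) = 1}
      ⊆ Metric.closedBall 0 1 := by
    intro v hv
    rw [Metric.mem_closedBall, dist_zero_right]
    rw [pi_norm_le_iff_of_nonneg zero_le_one]
    intro j
    have h1 : Complex.normSq (v j) ≤ 1 := by
      rw [← hv]
      exact Finset.single_le_sum (fun j _ => Complex.normSq_nonneg _) (Finset.mem_univ j)
    have h2 : ‖v j‖ ^ 2 ≤ 1 := by
      rwa [Complex.normSq_eq_norm_sq] at h1
    nlinarith [norm_nonneg (v j)]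
  exact (isCompact_closedBall (0 : Fin (n k) → ℂ) 1).of_isClosed_subset hclosed hsub

lemma rankOne_continuous :
    Continuous (rankOne : ((k : Fin m) → Fin (n k) → ℂ) → Tens m n) := by
  apply continuous_pi; intro I; apply continuous_pi; intro J
  apply continuous_finset_prod
  intro k _
  show Continuous fun z : ((k : Fin m) → Fin (n k) → ℂ) => z k (I k) * (starRingEnd ℂ) (z k (J k))
  fun_prop

lemma S_compact : IsCompact (S m n) := P_compact.image rankOne_continuous

/-- In a finite dimensional real normed space, the convex hull of a nonempty
compact set is compact. -/
lemma isCompact_convexHull_of_compact {E : Type*} [NormedAddCommGroup E] [NormedSpace ℝ E]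
    [FiniteDimensional ℝ E] {s : Set E} (hne : s.Nonempty) (hs : IsCompact s) :
    IsCompact (convexHull ℝ s) := by
  classical
  obtain ⟨x0, hx0⟩ := hne
  set N := Module.finrank ℝ E + 1 with hNdef
  have key : convexHull ℝ s =
      (fun p : (Fin N → ℝ) × (Fin N → E) => ∑ i, p.1 i • p.2 i) ''
        (stdSimplex ℝ (Fin N) ×ˢ Set.pi Set.univ fun _ => s) := by
    apply Set.Subset.antisymm
    · intro x hx
      obtain ⟨ι, hfin, z, w, hrange, hindep, hpos, hsum, heq⟩ :=
        eq_pos_convex_span_of_mem_convexHull hx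
      letI := hfin
      have hcard : Fintype.card ι ≤ N := by
        have h1 := hindep.card_le_finrank_succ
        have h2 : Module.finrank ℝ (vectorSpan ℝ (Set.range z)) ≤ Module.finrank ℝ E :=
          Submodule.finrank_le _
        omega
      set f : ι → Fin N := fun i => Fin.castLE hcard (Fintype.equivFin ι i) with hf
      have hfinj : Function.Injective f := by
        intro a b hab
        apply (Fintype.equivFin ι).injective
        apply Fin.ext
        simpa [hf, Fin.coe_castLE] using congrArg Fin.val hab
      set w' : Fin N → ℝ := fun j => if h : ∃ i, f i = j then w h.choose else 0 with hw'
      set z' : Fin N → E := fun j => if h : ∃ i, f i = j then z h.choose else x0 with hz'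
      have hwf : ∀ i, w' (f i) = w i := by
        intro i
        have h : ∃ i', f i' = f i := ⟨i, rfl⟩
        simp only [hw']
        rw [dif_pos h]
        exact congrArg w (hfinj h.choose_spec)
      have hzf : ∀ i, z' (f i) = z i := by
        intro i
        have h : ∃ i', f i' = f i := ⟨i, rfl⟩
        simp only [hz']
        rw [dif_pos h]
        exact congrArg z (hfinj h.choose_spec)
      have himg : ∀ j ∈ Finset.univ \ Finset.univ.image f, w' j = 0 := by
        intro j hj
        rw [Finset.mem_sdiff, Finset.mem_image] at hj
        simp only [hw']
        rw [dif_neg]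
        rintro ⟨i, hi⟩
        exact hj.2 ⟨i, Finset.mem_univ i, hi⟩
      have hwnn : ∀ j, 0 ≤ w' j := by
        intro j
        simp only [hw']
        split
        · exact (hpos _).le
        · exact le_refl 0
      have hzs : ∀ j, z' j ∈ s := by
        intro j
        simp only [hz']
        split
        · exact hrange (Set.mem_range_self _)
        · exact hx0
      have hwsum : ∑ j, w' j = 1 := by
        rw [← Finset.sum_subset (Finset.subset_univ (Finset.univ.image f))
          (fun j _ hj => himg j (Finset.mem_sdiff.mpr ⟨Finset.mem_univ j, hj⟩)),
          Finset.sum_image (fun a _ b _ h => hfinj h)]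
        rw [← hsum]
        exact Finset.sum_congr rfl fun i _ => hwf i
      refine ⟨⟨w', z'⟩, ⟨⟨hwnn, hwsum⟩, fun j _ => hzs j⟩, ?_⟩
      show ∑ j, w' j • z' j = x
      have hzero : ∀ j ∈ Finset.univ \ Finset.univ.image f, w' j • z' j = 0 := by
        intro j hj
        rw [himg j hj, zero_smul]
      rw [← Finset.sum_subset (Finset.subset_univ (Finset.univ.image f))
        (fun j _ hj => hzero j (Finset.mem_sdiff.mpr ⟨Finset.mem_univ j, hj⟩)),
        Finset.sum_image (fun a _ b _ h => hfinj h)]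
      rw [← heq]
      exact Finset.sum_congr rfl fun i _ => by rw [hwf i, hzf i]
    · rintro x ⟨⟨w, g⟩, ⟨hw, hg⟩, rfl⟩
      have hcm := Finset.centerMass_mem_convexHull (Finset.univ (α := Fin N))
        (w := w) (fun i _ => hw.1 i) (by rw [hw.2]; norm_num)
        (fun i _ => hg i (Set.mem_univ i))
      rwa [Finset.centerMass_eq_of_sum_1 _ _ hw.2] at hcm
  rw [key]
  refine (IsCompact.image ((isCompact_stdSimplex (𝕜 := ℝ) (ι := Fin N)).prod
    (isCompact_univ_pi fun _ => hs)) ?_)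
  exact continuous_finset_sum _ fun i _ =>
    ((continuous_apply i).comp continuous_fst).smul ((continuous_apply i).comp continuous_snd)

lemma sep_closed (hm : 1 ≤ m) (hn : ∀ k, 1 ≤ n k) :
    IsClosed {B : Tens m n | IsSep B} := by
  set K := {B : Tens m n | IsSep B} with hK
  set C := convexHull ℝ (S m n) with hC
  have hCcomp : IsCompact C := isCompact_convexHull_of_compact (S_nonempty hn) S_compact
  have hCK : C ⊆ K := convexHull_min (fun s hs => S_sep hs) (sep_convex hm)
  have hTcont : Continuous (Tl (m := m) (n := n)) := Tl.continuous_of_finiteDimensional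
  apply isClosed_of_closure_subset
  intro x hx
  set R := Tl x + 1 with hR
  set U := {y : Tens m n | Tl y < R} with hU
  have hUopen : IsOpen U := isOpen_lt hTcont continuous_const
  have hxU : x ∈ U := by simp only [hU, Set.mem_setOf_eq, hR]; linarith
  set D := (fun p : ℝ × Tens m n => p.1 • p.2) '' (Set.Icc (0 : ℝ) R ×ˢ C) with hD
  have hsub : K ∩ U ⊆ D := by
    rintro y ⟨hyK, hyU⟩
    obtain ⟨h0, c, hc, hyeq⟩ := sep_decomp hn hyK
    exact ⟨(Tl y, c), ⟨⟨h0, le_of_lt hyU⟩, hc⟩, hyeq.symm⟩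
  have hDcomp : IsCompact D :=
    (isCompact_Icc.prod hCcomp).image (continuous_fst.smul continuous_snd)
  have hxD : x ∈ D := by
    have h1 : x ∈ closure (U ∩ K) := hUopen.inter_closure ⟨hxU, hx⟩
    have h2 : closure (U ∩ K) ⊆ closure D :=
      closure_mono (by rw [Set.inter_comm]; exact hsub)
    exact hDcomp.isClosed.closure_subset (h2 h1)
  obtain ⟨⟨t, c⟩, ⟨ht, hc⟩, hx'⟩ := hxD
  show IsSep x
  rw [← hx']
  exact sep_smul hm ht.1 (hCK hc)

/-- Elementary tensor with a single (possibly) nonzero entry. -/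
def eTens (I₀ J₀ : (k : Fin m) → Fin (n k)) (c : ℂ) : Tens m n :=
  fun I J => if I = I₀ ∧ J = J₀ then c else 0

lemma eTens_decomp (I₀ J₀ : (k : Fin m) → Fin (n k)) (c : ℂ) :
    eTens I₀ J₀ c = c.re • eTens I₀ J₀ 1 + c.im • eTens I₀ J₀ Complex.I := by
  funext I J
  simp only [eTens, Pi.add_apply, Pi.smul_apply]
  split
  · simp only [Complex.real_smul, mul_one]
    exact (Complex.re_add_im c).symm
  · simp

lemma x_decomp (x : Tens m n) : x = ∑ I, ∑ J, eTens I J (x I J) := by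
  funext I' J'
  rw [Finset.sum_apply, Finset.sum_apply]
  simp only [Finset.sum_apply]
  simp [eTens, ite_and, Finset.sum_ite_eq]

lemma exists_repr (f : Tens m n →L[ℝ] ℝ) :
    ∃ A0 : Tens m n, ∀ x, (ip x A0).re = f x := by
  classical
  refine ⟨fun I J => (f (eTens I J 1) : ℂ) + (f (eTens I J Complex.I) : ℂ) * Complex.I,
    fun x => ?_⟩
  have hterm : ∀ (I J : (k : Fin m) → Fin (n k)) (c : ℂ),
      f (eTens I J c) = c.re * f (eTens I J 1) + c.im * f (eTens I J Complex.I) := by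
    intro I J c
    rw [eTens_decomp, map_add, map_smul, map_smul]
    simp [smul_eq_mul]
  have hre : ∀ I J : (k : Fin m) → Fin (n k),
      ((f (eTens I J 1) : ℂ) + (f (eTens I J Complex.I) : ℂ) * Complex.I).re
        = f (eTens I J 1) := by intro I J; simp
  have him : ∀ I J : (k : Fin m) → Fin (n k),
      ((f (eTens I J 1) : ℂ) + (f (eTens I J Complex.I) : ℂ) * Complex.I).im
        = f (eTens I J Complex.I) := by intro I J; simp
  rw [ip, Complex.re_sum]
  conv_rhs => rw [x_decomp x]
  rw [map_sum]
  refine Finset.sum_congr rfl fun I _ => ?_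
  rw [Complex.re_sum, map_sum]
  refine Finset.sum_congr rfl fun J _ => ?_
  rw [hterm I J (x I J), Complex.mul_re, Complex.conj_re, Complex.conj_im, hre I J, him I J]
  ring

/-- Hermitization preserves the real inner product with Hermitian tensors. -/
lemma herm_part_ip (A0 : Tens m n) {x : Tens m n} (hx : IsHerm x) :
    (ip x (fun I J => (A0 I J + (starRingEnd ℂ) (A0 J I)) / 2)).re = (ip x A0).re := by
  have hswap : ∑ I, ∑ J, x I J * A0 J I
      = ∑ I, ∑ J, (starRingEnd ℂ) (x I J) * A0 I J := by
    rw [Finset.sum_comm]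
    exact Finset.sum_congr rfl fun I _ => Finset.sum_congr rfl fun J _ => by rw [hx J I]
  have hconj : (starRingEnd ℂ) (ip x A0) = ∑ I, ∑ J, x I J * A0 J I := by
    rw [ip, map_sum, hswap]
    refine Finset.sum_congr rfl fun I _ => ?_
    rw [map_sum]
    refine Finset.sum_congr rfl fun J _ => by rw [map_mul, Complex.conj_conj]
  have hmain : ip (A := x) (fun I J => (A0 I J + (starRingEnd ℂ) (A0 J I)) / 2)
      = (ip x A0 + (starRingEnd ℂ) (ip x A0)) / 2 := by
    rw [ip]
    trans ∑ I, ∑ J, (x I J * (starRingEnd ℂ) (A0 I J) + x I J * A0 J I) / 2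
    · refine Finset.sum_congr rfl fun I _ => Finset.sum_congr rfl fun J _ => ?_
      rw [map_div₀, map_add, Complex.conj_conj]
      have h2 : (starRingEnd ℂ) (2 : ℂ) = 2 := by
        rw [show (2 : ℂ) = ((2 : ℝ) : ℂ) by norm_num, Complex.conj_ofReal]
      rw [h2]
      ring
    · simp only [add_div, Finset.sum_add_distrib, ← Finset.sum_div]
      rw [hconj, ip]
  rw [hmain, Complex.add_conj]
  have h3 : ((2 * (ip x A0).re : ℝ) : ℂ) / 2 = (((ip x A0).re : ℝ) : ℂ) := by
    push_cast; ring
  rw [h3, Complex.ofReal_re]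

/-- The separable cone and the psd cone of Hermitian tensors are dual to each other. -/
theorem separable_psd_duality
    (m : ℕ) (hm : 1 ≤ m) (n : Fin m → ℕ) (hn : ∀ k, 1 ≤ n k) :
    (∀ A : ((k : Fin m) → Fin (n k)) → ((k : Fin m) → Fin (n k)) → ℂ, IsHerm A →
      ((∀ B, IsHerm B → IsSep B → 0 ≤ (ip A B).re) ↔ IsPsd A))
    ∧
    (∀ B : ((k : Fin m) → Fin (n k)) → ((k : Fin m) → Fin (n k)) → ℂ, IsHerm B →
      ((∀ A, IsHerm A → IsPsd A → 0 ≤ (ip A B).re) ↔ IsSep B)) := by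
  constructor
  · intro A _
    constructor
    · intro h z
      exact h _ (rankOne_herm z) (rankOne_sep z)
    · intro hpsd B _ hBsep
      exact ip_sep_re hpsd hBsep
  · intro B hB
    constructor
    · intro h
      by_contra hBsep
      obtain ⟨f, u, hfu, hufB⟩ :=
        geometric_hahn_banach_closed_point (sep_convex hm) (sep_closed hm hn) hBsep
      have hu0 : 0 < u := by
        have h0 := hfu 0 sep_zero
        simpa using h0
      have hfK : ∀ y : Tens m n, IsSep y → f y ≤ 0 := by
        intro y hy
        by_contra hpos
        push_neg at hpos
        have ht : (0 : ℝ) ≤ u / f y + 1 := by positivity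
        have h2 := hfu _ (sep_smul hm ht hy)
        rw [map_smul, smul_eq_mul] at h2
        rw [div_add_one hpos.ne', div_mul_cancel₀ _ hpos.ne'] at h2
        linarith
      obtain ⟨A0, hA0⟩ := exists_repr (-f)
      simp only [ContinuousLinearMap.neg_apply] at hA0
      set A : Tens m n := fun I J => (A0 I J + (starRingEnd ℂ) (A0 J I)) / 2 with hA
      have hAherm : IsHerm A := by
        intro I J
        simp only [hA, map_div₀, map_add, Complex.conj_conj]
        have h2 : (starRingEnd ℂ) (2 : ℂ) = 2 := by
          rw [show (2 : ℂ) = ((2 : ℝ) : ℂ) by norm_num, Complex.conj_ofReal]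
        rw [h2]
        ring
      have hApsd : IsPsd A := by
        intro z
        rw [ip_re_comm, herm_part_ip A0 (rankOne_herm z), hA0]
        have := hfK _ (rankOne_sep z)
        linarith
      have hcontr := h A hAherm hApsd
      rw [ip_re_comm, herm_part_ip A0 hB, hA0] at hcontr
      linarith
    · intro hsep A _ hApsd
      exact ip_sep_re hApsd hsep

end HermitianTensorDuality
end

section
/- A Hermitian tensor H of format (n_1,…,n_m) is separable if and only if there exists a finite Borel measure μ on ℂ^{n_1} × ⋯ × ℂ^{n_m} whose support is contained in the multi-sphere {(z_1,…,z_m) : ‖z_1‖ = ⋯ = ‖z_m‖ = 1} and such that H_{IJ} = ∫ ∏_{k=1}^m (z_k)_{i_k} · conj((z_k)_{j_k}) dμ(z_1,…,z_m) for all multi-indices I = (i_1,…,i_m) and J = (j_1,…,j_m). -/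
open MeasureTheory

noncomputable instance {ι : Type*} : MeasurableSpace (EuclideanSpace ℂ ι) :=
  MeasurableSpace.comap WithLp.ofLp MeasurableSpace.pi

noncomputable instance {ι : Type*} [Fintype ι] : BorelSpace (EuclideanSpace ℂ ι) :=
  PiLp.borelSpace 2

section Aux

open Finset

/-- Convex hull of a compact set in a finite-dimensional normed space is compact. -/
theorem aux_isCompact_convexHull {E : Type} [NormedAddCommGroup E] [NormedSpace ℝ E]
    [FiniteDimensional ℝ E] {K : Set E} (hK : IsCompact K) :
    IsCompact (convexHull ℝ K) := by
  classical
  rcases K.eq_empty_or_nonempty with rfl | ⟨k₀, hk₀⟩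
  · simpa using isCompact_empty
  set N := Module.finrank ℝ E + 1 with hN
  set g : (Fin N → ℝ) × (Fin N → E) → E := fun p => ∑ i, p.1 i • p.2 i with hg
  have hgc : Continuous g := by
    refine continuous_finset_sum _ fun i _ => ?_
    exact ((continuous_apply i).comp continuous_fst).smul
      ((continuous_apply i).comp continuous_snd)
  have hD : IsCompact ((stdSimplex ℝ (Fin N)) ×ˢ (Set.univ.pi fun _ : Fin N => K)) :=
    (isCompact_stdSimplex (𝕜 := ℝ) (ι := Fin N)).prod (isCompact_univ_pi fun _ => hK)
  have him : convexHull ℝ K = g '' ((stdSimplex ℝ (Fin N)) ×ˢ (Set.univ.pi fun _ : Fin N => K)) := by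
    apply Set.Subset.antisymm
    · intro x hx
      obtain ⟨ι, hι, z, w, hzK, hai, hwpos, hwsum, hcomb⟩ :=
        eq_pos_convex_span_of_mem_convexHull hx
      have hcard : Fintype.card ι ≤ N := by
        refine le_trans hai.card_le_finrank_succ ?_
        exact Nat.add_le_add_right (Submodule.finrank_le _) 1
      obtain ⟨e⟩ : Nonempty (ι ↪ Fin N) :=
        Function.Embedding.nonempty_of_card_le (by simpa using hcard)
      have he : Function.Injective e := e.injective
      set w' : Fin N → ℝ := Function.extend e w 0 with hw'
      set z' : Fin N → E := Function.extend e z (fun _ => k₀) with hz'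
      refine ⟨(w', z'), ⟨?_, ?_⟩, ?_⟩
      · constructor
        · intro j
          dsimp only
          by_cases h : ∃ i, e i = j
          · obtain ⟨i, rfl⟩ := h
            rw [hw', he.extend_apply]
            exact (hwpos i).le
          · rw [hw', Function.extend_apply' _ _ _ h]
            rfl
        · have : ∑ j, w' j = ∑ j ∈ Finset.univ.map e, w' j := by
            refine (Finset.sum_subset (Finset.subset_univ _) ?_).symm
            intro j _ hj
            have h : ¬ ∃ i, e i = j := by
              rintro ⟨i, rfl⟩
              exact hj (Finset.mem_map_of_mem _ (Finset.mem_univ i))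
            rw [hw', Function.extend_apply' _ _ _ h]; rfl
          rw [this, Finset.sum_map]
          simp only [Function.Embedding.coeFn_mk, hw', he.extend_apply]
          exact hwsum
      · intro j _
        dsimp only
        by_cases h : ∃ i, e i = j
        · obtain ⟨i, rfl⟩ := h
          rw [hz', he.extend_apply]
          exact hzK (Set.mem_range_self i)
        · rw [hz', Function.extend_apply' _ _ _ h]
          exact hk₀
      · have : ∑ j, w' j • z' j = ∑ j ∈ Finset.univ.map e, w' j • z' j := by
          refine (Finset.sum_subset (Finset.subset_univ _) ?_).symm
          intro j _ hj
          have h : ¬ ∃ i, e i = j := by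
            rintro ⟨i, rfl⟩
            exact hj (Finset.mem_map_of_mem _ (Finset.mem_univ i))
          rw [hw', Function.extend_apply' _ _ _ h]
          simp
        rw [hg]
        simp only
        rw [this, Finset.sum_map]
        simp only [Function.Embedding.coeFn_mk, hw', hz', he.extend_apply]
        exact hcomb
    · rintro y ⟨⟨w, x⟩, ⟨hw, hx⟩, rfl⟩
      exact (convex_convexHull ℝ K).sum_mem (fun i _ => hw.1 i) hw.2
        (fun i _ => subset_convexHull ℝ K (hx i (Set.mem_univ i)))
  rw [him]
  exact hD.image hgc

end Aux

section Defs

variable (m : ℕ) (n : Fin m → ℕ)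

abbrev TensSp := ((k : Fin m) → Fin (n k)) → ((k : Fin m) → Fin (n k)) → ℂ

abbrev ZSp := (k : Fin m) → EuclideanSpace ℂ (Fin (n k))

noncomputable def rk1 (z : ZSp m n) : TensSp m n :=
  fun I J => ∏ k, (z k) (I k) * (starRingEnd ℂ) ((z k) (J k))

def SepSet : Set (TensSp m n) :=
  { t | ∃ (r : ℕ) (u : Fin r → (k : Fin m) → Fin (n k) → ℂ),
      ∀ I J, t I J = ∑ i, ∏ k, u i k (I k) * (starRingEnd ℂ) (u i k (J k)) }

def Sph : Set (ZSp m n) := {z | ∀ k, ‖z k‖ = 1}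

end Defs

section Cone

variable {m : ℕ} {n : Fin m → ℕ}

theorem sep_zero : (0 : TensSp m n) ∈ SepSet m n := by
  refine ⟨0, fun i => 0, fun I J => by simp⟩

theorem sep_add {t₁ t₂ : TensSp m n} (h₁ : t₁ ∈ SepSet m n) (h₂ : t₂ ∈ SepSet m n) :
    t₁ + t₂ ∈ SepSet m n := by
  obtain ⟨r₁, u₁, hu₁⟩ := h₁
  obtain ⟨r₂, u₂, hu₂⟩ := h₂
  refine ⟨r₁ + r₂, Fin.addCases u₁ u₂, fun I J => ?_⟩
  rw [Fin.sum_univ_add]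
  simp only [Fin.addCases_left, Fin.addCases_right]
  simp [Pi.add_apply, hu₁ I J, hu₂ I J]

theorem sep_smul (hm : 1 ≤ m) {c : ℝ} (hc : 0 ≤ c) {t : TensSp m n} (h : t ∈ SepSet m n) :
    c • t ∈ SepSet m n := by
  classical
  obtain ⟨r, u, hu⟩ := h
  set k₀ : Fin m := ⟨0, hm⟩
  set s : Fin m → ℂ := fun k => if k = k₀ then (Real.sqrt c : ℂ) else 1 with hs
  refine ⟨r, fun i k j => s k * u i k j, fun I J => ?_⟩
  have key : ∀ i : Fin r, ∏ k, (s k * u i k (I k)) * (starRingEnd ℂ) (s k * u i k (J k))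
      = (c : ℂ) * ∏ k, u i k (I k) * (starRingEnd ℂ) (u i k (J k)) := by
    intro i
    have : ∀ k, (s k * u i k (I k)) * (starRingEnd ℂ) (s k * u i k (J k))
        = (s k * (starRingEnd ℂ) (s k)) * (u i k (I k) * (starRingEnd ℂ) (u i k (J k))) := by
      intro k; rw [map_mul]; ring
    rw [Finset.prod_congr rfl fun k _ => this k, Finset.prod_mul_distrib]
    congr 1
    have : ∀ k, s k * (starRingEnd ℂ) (s k) = if k = k₀ then (c : ℂ) else 1 := by
      intro k
      rw [hs]
      by_cases hk : k = k₀ <;> simp [hk, ← Complex.ofReal_mul, Real.mul_self_sqrt hc]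
    rw [Finset.prod_congr rfl fun k _ => this k, Finset.prod_ite_eq' Finset.univ k₀ fun _ => (c : ℂ)]
    simp
  rw [Finset.sum_congr rfl fun i _ => key i, ← Finset.mul_sum]
  simp [hu I J, Complex.real_smul]

theorem rk1_mem_sep (z : ZSp m n) : rk1 m n z ∈ SepSet m n := by
  refine ⟨1, fun _ k => z k, fun I J => ?_⟩
  simp [rk1]

theorem sep_convex (hm : 1 ≤ m) : Convex ℝ (SepSet m n) :=
  fun x hx y hy a b ha hb _ => sep_add (sep_smul hm ha hx) (sep_smul hm hb hy)

open scoped Classical in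
noncomputable def nzv {N : ℕ} (hN : 1 ≤ N) (v : EuclideanSpace ℂ (Fin N)) :
    EuclideanSpace ℂ (Fin N) :=
  if v = 0 then EuclideanSpace.single ⟨0, hN⟩ 1 else ‖v‖⁻¹ • v

theorem norm_nzv {N : ℕ} (hN : 1 ≤ N) (v : EuclideanSpace ℂ (Fin N)) : ‖nzv hN v‖ = 1 := by
  rw [nzv]
  by_cases h : v = 0
  · simp [h, EuclideanSpace.norm_single]
  · simp only [h, if_false, norm_smul, norm_inv, norm_norm]
    field_simp

theorem nzv_spec {N : ℕ} (hN : 1 ≤ N) (v : EuclideanSpace ℂ (Fin N)) (a b : Fin N) :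
    ((‖v‖ ^ 2 : ℝ) : ℂ) * (nzv hN v a * (starRingEnd ℂ) (nzv hN v b))
      = v a * (starRingEnd ℂ) (v b) := by
  by_cases h : v = 0
  · subst h
    simp
  · have hv : (‖v‖ : ℂ) ≠ 0 := by
      simpa using (norm_ne_zero_iff.mpr h)
    rw [nzv, if_neg h]
    have ha : ((‖v‖⁻¹ • v : EuclideanSpace ℂ (Fin N)) a) = (‖v‖ : ℂ)⁻¹ * v a := by
      rw [PiLp.smul_apply]
      simp [Complex.real_smul]
    have hb : ((‖v‖⁻¹ • v : EuclideanSpace ℂ (Fin N)) b) = (‖v‖ : ℂ)⁻¹ * v b := by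
      rw [PiLp.smul_apply]
      simp [Complex.real_smul]
    rw [ha, hb, map_mul, map_inv₀, Complex.conj_ofReal]
    push_cast
    field_simp

theorem sep_decomp (hn : ∀ k, 1 ≤ n k) {r : ℕ}
    (u : Fin r → (k : Fin m) → Fin (n k) → ℂ) :
    ∃ (a : Fin r → ℝ) (ζ : Fin r → ZSp m n),
      (∀ i, 0 ≤ a i) ∧ (∀ i, ζ i ∈ Sph m n) ∧
      ∀ (I J : (k : Fin m) → Fin (n k)),
        (∑ i, ∏ k, u i k (I k) * (starRingEnd ℂ) (u i k (J k)))
        = ∑ i, ((a i : ℝ) : ℂ) * rk1 m n (ζ i) I J := by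
  set vu : Fin r → (k : Fin m) → EuclideanSpace ℂ (Fin (n k)) :=
    fun i k => (WithLp.equiv 2 _).symm (u i k) with hvu
  refine ⟨fun i => ∏ k, ‖vu i k‖ ^ 2, fun i k => nzv (hn k) (vu i k),
    fun i => Finset.prod_nonneg fun k _ => sq_nonneg _,
    fun i k => norm_nzv (hn k) (vu i k), fun I J => ?_⟩
  refine Finset.sum_congr rfl fun i _ => ?_
  rw [rk1]
  push_cast
  rw [← Finset.prod_mul_distrib]
  refine Finset.prod_congr rfl fun k _ => ?_
  have h2 := nzv_spec (hn k) (vu i k) (I k) (J k)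
  push_cast at h2
  rw [h2]
  simp [hvu]

noncomputable def trT : TensSp m n →ₗ[ℝ] ℝ where
  toFun t := (∑ I, t I I).re
  map_add' t₁ t₂ := by
    simp [Finset.sum_add_distrib, Complex.add_re]
  map_smul' c t := by
    simp [Finset.smul_sum, Complex.smul_re, Finset.mul_sum]

theorem trT_cont : Continuous (trT (m := m) (n := n)) :=
  LinearMap.continuous_of_finiteDimensional _

theorem trT_rk1 (z : ZSp m n) (hz : z ∈ Sph m n) : trT (rk1 m n z) = 1 := by
  have key : (∑ I, rk1 m n z I I) = 1 := by
    have h1 : (∑ I, rk1 m n z I I)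
        = ∏ k, ∑ j, (z k) j * (starRingEnd ℂ) ((z k) j) := by
      rw [Finset.prod_univ_sum]
      rw [Fintype.piFinset_univ]
      rfl
    rw [h1]
    refine Finset.prod_eq_one fun k _ => ?_
    have h2 : ∀ j, (z k) j * (starRingEnd ℂ) ((z k) j) = ((‖(z k) j‖ ^ 2 : ℝ) : ℂ) := by
      intro j
      rw [Complex.mul_conj, Complex.normSq_eq_norm_sq]
    rw [Finset.sum_congr rfl fun j _ => h2 j, ← Complex.ofReal_sum]
    have h3 : ∑ j, ‖(z k) j‖ ^ 2 = ‖z k‖ ^ 2 := by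
      rw [EuclideanSpace.norm_eq]
      rw [Real.sq_sqrt (Finset.sum_nonneg fun j _ => sq_nonneg _)]
    rw [h3, hz k]
    norm_num
  show (∑ I, rk1 m n z I I).re = 1
  rw [key]
  simp

theorem sph_nonempty (hn : ∀ k, 1 ≤ n k) : (Sph m n).Nonempty :=
  ⟨fun k => EuclideanSpace.single ⟨0, hn k⟩ 1, fun k => by
    simp [EuclideanSpace.norm_single]⟩

theorem isCompact_sph : IsCompact (Sph m n) := by
  have h : Sph m n = Set.univ.pi fun k => Metric.sphere (0 : EuclideanSpace ℂ (Fin (n k))) 1 := by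
    ext z
    simp [Sph, Set.mem_univ_pi, mem_sphere_zero_iff_norm]
  rw [h]
  exact isCompact_univ_pi fun k => isCompact_sphere _ _

theorem rk1_continuous : Continuous (rk1 m n) := by
  refine continuous_pi fun I => continuous_pi fun J => ?_
  refine continuous_finset_prod _ fun k _ => ?_
  have h1 : Continuous fun z : ZSp m n => (z k) (I k) :=
    (EuclideanSpace.proj (I k) : EuclideanSpace ℂ (Fin (n k)) →L[ℂ] ℂ).continuous.comp
      (continuous_apply k)
  have h2 : Continuous fun z : ZSp m n => (z k) (J k) :=
    (EuclideanSpace.proj (J k) : EuclideanSpace ℂ (Fin (n k)) →L[ℂ] ℂ).continuous.comp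
      (continuous_apply k)
  exact h1.mul (Complex.continuous_conj.comp h2)

theorem convexHull_rk1_subset_sep (hm : 1 ≤ m) :
    convexHull ℝ (rk1 m n '' Sph m n) ⊆ SepSet m n :=
  convexHull_min (by rintro t ⟨z, _, rfl⟩; exact rk1_mem_sep z) (sep_convex hm)

theorem sep_repr (hn : ∀ k, 1 ≤ n k) {t : TensSp m n} (ht : t ∈ SepSet m n) :
    ∃ c : ℝ, 0 ≤ c ∧ ∃ x ∈ convexHull ℝ (rk1 m n '' Sph m n), t = c • x := by
  obtain ⟨r, u, hu⟩ := ht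
  obtain ⟨a, ζ, ha, hζ, hsum⟩ := sep_decomp hn u
  have ht' : t = ∑ i, a i • rk1 m n (ζ i) := by
    funext I J
    rw [hu I J, hsum I J, Finset.sum_apply, Finset.sum_apply]
    refine Finset.sum_congr rfl fun i _ => ?_
    simp [Complex.real_smul]
  rcases eq_or_lt_of_le (Finset.sum_nonneg fun i (_ : i ∈ Finset.univ) => ha i) with hz | hpos
  · have hall : ∀ i ∈ Finset.univ, a i = 0 :=
      (Finset.sum_eq_zero_iff_of_nonneg fun i _ => ha i).mp hz.symm
    have ht0 : t = 0 := by
      rw [ht']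
      exact Finset.sum_eq_zero fun i hi => by rw [hall i hi, zero_smul]
    obtain ⟨z₀, hz₀⟩ := sph_nonempty hn
    exact ⟨0, le_refl 0, rk1 m n z₀, subset_convexHull _ _ ⟨z₀, hz₀, rfl⟩, by
      rw [ht0, zero_smul]⟩
  · refine ⟨∑ i, a i, hpos.le, Finset.univ.centerMass a (fun i => rk1 m n (ζ i)),
      Finset.centerMass_mem_convexHull _ (fun i _ => ha i) hpos
        (fun i _ => ⟨ζ i, hζ i, rfl⟩), ?_⟩
    rw [Finset.centerMass, smul_smul, mul_inv_cancel₀ hpos.ne', one_smul, ht']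

theorem isClosed_sep (hm : 1 ≤ m) (hn : ∀ k, 1 ≤ n k) : IsClosed (SepSet m n) := by
  have hKco : IsCompact (rk1 m n '' Sph m n) := isCompact_sph.image rk1_continuous
  have hCco : IsCompact (convexHull ℝ (rk1 m n '' Sph m n)) := aux_isCompact_convexHull hKco
  have hC1 : ∀ x ∈ convexHull ℝ (rk1 m n '' Sph m n), trT x = 1 := by
    intro x hx
    refine convexHull_min ?_ (convex_hyperplane (trT (m := m) (n := n)).isLinear 1) hx
    rintro y ⟨z, hz, rfl⟩
    exact trT_rk1 z hz
  obtain ⟨M, hM⟩ := isBounded_iff_forall_norm_le.mp hCco.isBounded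
  refine IsSeqClosed.isClosed ?_
  intro tseq t htn hlim
  choose c hc0 x hxC htx using fun j => sep_repr hn (htn j)
  have htr : ∀ j, trT (tseq j) = c j := by
    intro j
    rw [htx j, _root_.map_smul, hC1 _ (hxC j)]
    simp
  have hct : Filter.Tendsto c Filter.atTop (nhds (trT t)) := by
    refine Filter.Tendsto.congr (fun j => htr j) ?_
    exact (trT_cont.tendsto t).comp hlim
  have hcl : 0 ≤ trT t := ge_of_tendsto' hct hc0
  rcases eq_or_lt_of_le hcl with hz | hpos
  · have hbound : ∀ j, ‖tseq j‖ ≤ c j * M := by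
      intro j
      rw [htx j, norm_smul, Real.norm_eq_abs, abs_of_nonneg (hc0 j)]
      exact mul_le_mul_of_nonneg_left (hM _ (hxC j)) (hc0 j)
    have h0 : Filter.Tendsto (fun j => ‖tseq j‖) Filter.atTop (nhds 0) := by
      refine squeeze_zero (fun j => norm_nonneg _) hbound ?_
      have := hct.mul_const M
      rwa [← hz, zero_mul] at this
    have ht0 : t = 0 :=
      tendsto_nhds_unique hlim (tendsto_zero_iff_norm_tendsto_zero.mpr h0)
    rw [ht0]
    exact sep_zero
  · have hev : ∀ᶠ j in Filter.atTop, 0 < c j := hct.eventually (eventually_gt_nhds hpos)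
    have hxt : Filter.Tendsto (fun j => (c j)⁻¹ • tseq j) Filter.atTop
        (nhds ((trT t)⁻¹ • t)) :=
      (hct.inv₀ hpos.ne').smul hlim
    have hmem : (trT t)⁻¹ • t ∈ convexHull ℝ (rk1 m n '' Sph m n) := by
      refine hCco.isClosed.mem_of_tendsto hxt ?_
      filter_upwards [hev] with j hj
      rw [htx j, smul_smul, inv_mul_cancel₀ hj.ne', one_smul]
      exact hxC j
    have : t = trT t • ((trT t)⁻¹ • t) := (smul_inv_smul₀ hpos.ne' t).symm
    rw [this]
    exact sep_smul hm hcl (convexHull_rk1_subset_sep hm hmem)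

end Cone


theorem coord_norm_le {N : ℕ} (v : EuclideanSpace ℂ (Fin N)) (a : Fin N) : ‖v a‖ ≤ ‖v‖ := by
  rw [EuclideanSpace.norm_eq]
  rw [show ‖v a‖ = Real.sqrt (‖v a‖ ^ 2) from (Real.sqrt_sq (norm_nonneg _)).symm]
  exact Real.sqrt_le_sqrt (Finset.single_le_sum (f := fun i => ‖v i‖ ^ 2)
    (fun i _ => sq_nonneg _) (Finset.mem_univ a))

/-- A Hermitian tensor is separable iff it is the "moment tensor" of a finite Borel
measure supported in the multi-sphere. -/
theorem separable_iff_representing_measure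
    (m : ℕ) (hm : 1 ≤ m) (n : Fin m → ℕ) (hn : ∀ k, 1 ≤ n k)
    (H : ((k : Fin m) → Fin (n k)) → ((k : Fin m) → Fin (n k)) → ℂ)
    (hH : ∀ I J, H I J = (starRingEnd ℂ) (H J I)) :
    (∃ (r : ℕ) (u : (i : Fin r) → (k : Fin m) → Fin (n k) → ℂ),
        ∀ I J, H I J = ∑ i, ∏ k, u i k (I k) * (starRingEnd ℂ) (u i k (J k)))
      ↔
    (∃ μ : Measure ((k : Fin m) → EuclideanSpace ℂ (Fin (n k))),
        IsFiniteMeasure μ ∧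
        μ {z | ∀ k, ‖z k‖ = 1}ᶜ = 0 ∧
        ∀ I J, H I J =
          ∫ z, (∏ k, (z k) (I k) * (starRingEnd ℂ) ((z k) (J k))) ∂μ) := by
  have hSph_closed : IsClosed (Sph m n) := isCompact_sph.isClosed
  have hSph_meas : MeasurableSet (Sph m n) := hSph_closed.measurableSet
  have hset : {z : ZSp m n | ∀ k, ‖z k‖ = 1} = Sph m n := rfl
  constructor
  · rintro ⟨r, u, hu⟩
    obtain ⟨a, ζ, ha, hζ, hsum⟩ := sep_decomp hn u
    set μ : Measure (ZSp m n) :=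
      ∑ i : Fin r, ENNReal.ofReal (a i) • Measure.dirac (ζ i) with hμ
    have happ : ∀ s : Set (ZSp m n),
        μ s = ∑ i : Fin r, ENNReal.ofReal (a i) * Measure.dirac (ζ i) s := by
      intro s
      rw [hμ, Measure.finset_sum_apply]
      rfl
    refine ⟨μ, ?_, ?_, ?_⟩
    · constructor
      rw [happ]
      refine ENNReal.sum_lt_top.mpr fun i _ => ?_
      simp [ENNReal.mul_lt_top, ENNReal.ofReal_lt_top]
    · rw [hset, happ]
      refine Finset.sum_eq_zero fun i _ => ?_
      rw [Measure.dirac_apply' _ hSph_meas.compl]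
      rw [Set.indicator_of_notMem (by simpa using hζ i)]
      simp
    · intro I J
      set g : ZSp m n → ℂ := fun z => rk1 m n z I J with hg
      have hgc : Continuous g :=
        (continuous_apply J).comp ((continuous_apply I).comp rk1_continuous)
      have hgint : ∀ i : Fin r, Integrable g (ENNReal.ofReal (a i) • Measure.dirac (ζ i)) := by
        intro i
        refine Integrable.smul_measure ?_ ENNReal.ofReal_ne_top
        refine ⟨hgc.aestronglyMeasurable, ?_⟩
        rw [HasFiniteIntegral, lintegral_dirac' _ hgc.measurable.enorm]
        exact enorm_lt_top
      have hint : ∫ z, (∏ k, (z k) (I k) * (starRingEnd ℂ) ((z k) (J k))) ∂μ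
          = ∑ i : Fin r, a i • g (ζ i) := by
        rw [show (fun z : ZSp m n => ∏ k, (z k) (I k) * (starRingEnd ℂ) ((z k) (J k))) = g
          from rfl]
        rw [hμ, integral_finset_sum_measure fun i _ => hgint i]
        refine Finset.sum_congr rfl fun i _ => ?_
        rw [integral_smul_measure, integral_dirac' _ _ hgc.stronglyMeasurable,
          ENNReal.toReal_ofReal (ha i)]
      rw [hint, hu I J, hsum I J]
      refine Finset.sum_congr rfl fun i _ => ?_
      rw [Complex.real_smul]
  · rintro ⟨μ, hfin, hnull, hint⟩
    set F : ZSp m n → TensSp m n := rk1 m n with hF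
    have hae : ∀ᵐ z ∂μ, z ∈ Sph m n := by
      rw [ae_iff]
      exact hnull
    have hbdd : ∀ z ∈ Sph m n, ‖F z‖ ≤ 1 := by
      intro z hz
      refine (pi_norm_le_iff_of_nonneg zero_le_one).mpr fun I => ?_
      refine (pi_norm_le_iff_of_nonneg zero_le_one).mpr fun J => ?_
      rw [hF, rk1, norm_prod]
      refine Finset.prod_le_one (fun k _ => norm_nonneg _) fun k _ => ?_
      rw [norm_mul]
      have h1 : ‖(z k) (I k)‖ ≤ 1 := by
        have := coord_norm_le (z k) (I k)
        rwa [hz k] at this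
      have h2 : ‖(starRingEnd ℂ) ((z k) (J k))‖ ≤ 1 := by
        rw [RCLike.norm_conj]
        have := coord_norm_le (z k) (J k)
        rwa [hz k] at this
      calc ‖(z k) (I k)‖ * ‖(starRingEnd ℂ) ((z k) (J k))‖ ≤ 1 * 1 :=
            mul_le_mul h1 h2 (norm_nonneg _) zero_le_one
        _ = 1 := mul_one 1
    have hFi : Integrable F μ := by
      refine ⟨rk1_continuous.aestronglyMeasurable, ?_⟩
      refine HasFiniteIntegral.of_bounded (C := 1) ?_
      filter_upwards [hae] with z hz
      exact hbdd z hz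
    have hHF : H = ∫ z, F z ∂μ := by
      funext I J
      set L : TensSp m n →L[ℝ] ℂ :=
        (ContinuousLinearMap.proj (R := ℝ) (φ := fun _ : (k : Fin m) → Fin (n k) => ℂ) J).comp
          (ContinuousLinearMap.proj
            (R := ℝ) (φ := fun _ : (k : Fin m) → Fin (n k) => ((k : Fin m) → Fin (n k)) → ℂ) I)
        with hL
      have hLF : ∀ z, L (F z) = F z I J := fun z => rfl
      have := L.integral_comp_comm hFi
      rw [hint I J, show (fun z : ZSp m n =>
        ∏ k, (z k) (I k) * (starRingEnd ℂ) ((z k) (J k))) = fun z => L (F z) from rfl, this]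
      rfl
    suffices hS : H ∈ SepSet m n by exact hS
    rw [hHF]
    by_cases hμ0 : μ = 0
    · rw [hμ0]
      simpa using sep_zero
    · haveI : NeZero μ := ⟨hμ0⟩
      have havg : (⨍ z, F z ∂μ) ∈ SepSet m n :=
        (sep_convex hm).average_mem (isClosed_sep hm hn) (hae.mono fun z hz => rk1_mem_sep z) hFi
      have htR : (μ Set.univ).toReal ≠ 0 := by
        simp [ENNReal.toReal_eq_zero_iff, hμ0, measure_ne_top μ Set.univ,
          Measure.measure_univ_eq_zero]
      have : ∫ z, F z ∂μ = (μ Set.univ).toReal • (⨍ z, F z ∂μ) := by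
        rw [average_eq, smul_smul, measureReal_def, mul_inv_cancel₀ htR, one_smul]
      rw [this]
      exact sep_smul hm ENNReal.toReal_nonneg havg
end

section
/- If a Hermitian tensor H of format (n_1,…,n_m) is not separable, then there exists a positive definite Hermitian tensor A of the same format (i.e., Re⟨A, [z_1,…,z_m]_⊗h⟩ > 0 whenever all z_k ∈ ℂ^{n_k} are nonzero) such that Re⟨A, H⟩ < 0. -/
namespace HermitianTensorSeparatingHyperplane

variable {m : ℕ} {n : Fin m → ℕ}

/-- A complex array indexed by pairs of multi-indices is Hermitian. -/
def IsHerm (H : ((k : Fin m) → Fin (n k)) → ((k : Fin m) → Fin (n k)) → ℂ) : Prop :=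
  ∀ I J, H I J = (starRingEnd ℂ) (H J I)

/-- The rank-1 Hermitian tensor `[z_1, …, z_m]_⊗h`. -/
def rankOne (z : (k : Fin m) → Fin (n k) → ℂ) :
    ((k : Fin m) → Fin (n k)) → ((k : Fin m) → Fin (n k)) → ℂ :=
  fun I J => ∏ k, z k (I k) * (starRingEnd ℂ) (z k (J k))

/-- The inner product `⟨A,B⟩ = ∑_{I,J} A_{IJ} conj(B_{IJ})`. -/
noncomputable def ip (A B : ((k : Fin m) → Fin (n k)) → ((k : Fin m) → Fin (n k)) → ℂ) : ℂ :=
  ∑ I, ∑ J, A I J * (starRingEnd ℂ) (B I J)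

/-! ### Auxiliary general lemmas -/

section CompactHull
variable {E : Type} [NormedAddCommGroup E] [NormedSpace ℝ E] [FiniteDimensional ℝ E]

theorem isCompact_convexHull_of_isCompact' {s : Set E} (hs : IsCompact s) :
    IsCompact (convexHull ℝ s) := by
  classical
  rcases s.eq_empty_or_nonempty with rfl | ⟨b₀, hb₀⟩
  · simp only [convexHull_empty]; exact isCompact_empty
  set N := Module.finrank ℝ E + 1 with hN
  have hT : Continuous (fun p : (Fin N → ℝ) × (Fin N → E) => ∑ i, p.1 i • p.2 i) := by
    refine continuous_finset_sum _ fun i _ => ?_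
    exact ((continuous_apply i).comp continuous_fst).smul
      ((continuous_apply i).comp continuous_snd)
  have hdom : IsCompact ((stdSimplex ℝ (Fin N)) ×ˢ (Set.pi Set.univ fun _ : Fin N => s)) :=
    (isCompact_stdSimplex (𝕜 := ℝ) (ι := Fin N)).prod (isCompact_univ_pi fun _ => hs)
  have himg : convexHull ℝ s =
      (fun p : (Fin N → ℝ) × (Fin N → E) => ∑ i, p.1 i • p.2 i) ''
        ((stdSimplex ℝ (Fin N)) ×ˢ (Set.pi Set.univ fun _ : Fin N => s)) := by
    apply Set.Subset.antisymm
    · intro x hx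
      obtain ⟨ι, hι, z, w, hrange, hai, hpos, hsum, hxe⟩ :=
        eq_pos_convex_span_of_mem_convexHull hx
      have hcard : Fintype.card ι ≤ N := by
        calc Fintype.card ι ≤ Module.finrank ℝ (vectorSpan ℝ (Set.range z)) + 1 :=
              hai.card_le_finrank_succ
        _ ≤ N := by
              have := Submodule.finrank_le (vectorSpan ℝ (Set.range z))
              omega
      obtain ⟨e⟩ : Nonempty (ι ↪ Fin N) := by
        refine Function.Embedding.nonempty_of_card_le ?_
        simpa using hcard
      have hgen : ∀ {M : Type} [AddCommMonoid M] (g : ι → M),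
          (∑ j, if h : ∃ i, e i = j then g h.choose else 0) = ∑ i, g i := by
        intro M _ g
        have h1 : (∑ j : Fin N, if h : ∃ i, e i = j then g h.choose else 0)
            = ∑ j ∈ Finset.univ.map e, (if h : ∃ i, e i = j then g h.choose else 0) := by
          refine (Finset.sum_subset (Finset.subset_univ _) fun j _ hj => ?_).symm
          rw [dif_neg]
          rintro ⟨i, rfl⟩
          exact hj (Finset.mem_map_of_mem e (Finset.mem_univ i))
        rw [h1, Finset.sum_map]
        refine Finset.sum_congr rfl fun i _ => ?_
        have hex : ∃ i', e i' = e i := ⟨i, rfl⟩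
        rw [dif_pos hex]
        congr 1
        exact e.injective hex.choose_spec
      set w' : Fin N → ℝ := fun j => if h : ∃ i, e i = j then w h.choose else 0 with hw'
      set b' : Fin N → E := fun j => if h : ∃ i, e i = j then z h.choose else b₀ with hb'
      refine ⟨(w', b'), ⟨⟨fun j => ?_, ?_⟩, fun j _ => ?_⟩, ?_⟩
      · by_cases h : ∃ i, e i = j
        · simp only [hw', dif_pos h]; exact (hpos _).le
        · simp [hw', dif_neg h]
      · simpa only [hw'] using (hgen w).trans hsum
      · by_cases h : ∃ i, e i = j
        · simp only [hb', dif_pos h]; exact hrange ⟨_, rfl⟩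
        · simp [hb', dif_neg h, hb₀]
      · have : ∀ j, w' j • b' j = (if h : ∃ i, e i = j then w h.choose • z h.choose else 0) := by
          intro j
          by_cases h : ∃ i, e i = j
          · simp [hw', hb', dif_pos h]
          · simp [hw', hb', dif_neg h]
        simp only [this]
        exact (hgen fun i => w i • z i).trans hxe
    · rintro x ⟨⟨w, b⟩, ⟨⟨hw0, hw1⟩, hbs⟩, rfl⟩
      have := Finset.centerMass_mem_convexHull (Finset.univ : Finset (Fin N))
        (fun i _ => hw0 i) (by rw [hw1]; norm_num) (fun i _ => hbs i (Set.mem_univ i))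
      rwa [Finset.centerMass_eq_of_sum_1 _ _ hw1] at this
  rw [himg]
  exact hdom.image hT

end CompactHull

section Cone
variable {E : Type} [NormedAddCommGroup E] [NormedSpace ℝ E]

theorem isClosed_cone' {D : Set E} (hD : IsCompact D) (f : E →L[ℝ] ℝ)
    (hf : ∀ c ∈ D, f c = 1) :
    IsClosed {x : E | ∃ t : ℝ, 0 ≤ t ∧ ∃ c ∈ D, x = t • c} := by
  refine IsSeqClosed.isClosed ?_
  intro x p hx hp
  choose t ht c hc hxe using hx
  have hft : ∀ j, f (x j) = t j := by
    intro j; rw [hxe j, map_smul]; simp [hf _ (hc j)]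
  have htend : Filter.Tendsto (fun j => f (x j)) Filter.atTop (nhds (f p)) :=
    (f.continuous.tendsto p).comp hp
  obtain ⟨c₀, hc₀, φ, hφ, hcc⟩ := hD.tendsto_subseq hc
  have h1 : Filter.Tendsto (fun j => x (φ j)) Filter.atTop (nhds p) := hp.comp hφ.tendsto_atTop
  have h2 : Filter.Tendsto (fun j => x (φ j)) Filter.atTop (nhds (f p • c₀)) := by
    have ht' : Filter.Tendsto (fun j => t (φ j)) Filter.atTop (nhds (f p)) := by
      have := htend.comp hφ.tendsto_atTop
      simpa [Function.comp_def, hft] using this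
    refine (ht'.smul hcc).congr fun j => ?_
    simp only [Function.comp]; rw [← hxe]
  have hpe : p = f p • c₀ := tendsto_nhds_unique h1 h2
  refine ⟨f p, ?_, c₀, hc₀, hpe⟩
  exact ge_of_tendsto' htend fun j => by rw [hft]; exact ht j

theorem convex_cone' {D : Set E} (hconv : Convex ℝ D) :
    Convex ℝ {x : E | ∃ t : ℝ, 0 ≤ t ∧ ∃ c ∈ D, x = t • c} := by
  rintro x ⟨t₁, ht₁, c₁, hc₁, rfl⟩ y ⟨t₂, ht₂, c₂, hc₂, rfl⟩ a b ha hb hab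
  have key : a • t₁ • c₁ + b • t₂ • c₂ = (a*t₁) • c₁ + (b*t₂) • c₂ := by
    rw [smul_smul, smul_smul]
  by_cases hs : a * t₁ + b * t₂ = 0
  · have h1 : a * t₁ = 0 := by nlinarith [mul_nonneg ha ht₁, mul_nonneg hb ht₂]
    have h2 : b * t₂ = 0 := by nlinarith [mul_nonneg ha ht₁, mul_nonneg hb ht₂]
    refine ⟨0, le_refl 0, c₁, hc₁, ?_⟩
    rw [key, h1, h2]; simp
  · have hs0 : 0 < a * t₁ + b * t₂ :=
      lt_of_le_of_ne (by positivity) (Ne.symm hs)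
    refine ⟨a * t₁ + b * t₂, hs0.le,
      (a*t₁/(a*t₁+b*t₂)) • c₁ + (b*t₂/(a*t₁+b*t₂)) • c₂,
      hconv hc₁ hc₂ (div_nonneg (mul_nonneg ha ht₁) hs0.le)
        (div_nonneg (mul_nonneg hb ht₂) hs0.le) (by field_simp), ?_⟩
    rw [key, smul_add, smul_smul, smul_smul]
    rw [mul_div_cancel₀ _ hs, mul_div_cancel₀ _ hs]

end Cone

/-! ### Tensor lemmas -/

open ComplexConjugate

lemma rankOne_herm (z : (k : Fin m) → Fin (n k) → ℂ) : IsHerm (rankOne z) := by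
  intro I J
  simp only [rankOne, map_prod, map_mul, Complex.conj_conj]
  exact Finset.prod_congr rfl fun k _ => mul_comm _ _

lemma rankOne_smul (r : Fin m → ℝ) (z : (k : Fin m) → Fin (n k) → ℂ) :
    rankOne (fun k => ((r k : ℂ)) • z k)
      = fun I J => ((∏ k, r k ^ 2 : ℝ) : ℂ) * rankOne z I J := by
  funext I J
  simp only [rankOne, Pi.smul_apply, smul_eq_mul, map_mul, Complex.conj_ofReal]
  calc ∏ k, (r k : ℂ) * z k (I k) * ((r k : ℂ) * conj (z k (J k)))
      = ∏ k, ((r k : ℂ)^2 * (z k (I k) * conj (z k (J k)))) :=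
        Finset.prod_congr rfl fun k _ => by ring
    _ = (∏ k, (r k:ℂ)^2) * ∏ k, (z k (I k) * conj (z k (J k))) := Finset.prod_mul_distrib
    _ = _ := by push_cast; ring

lemma sum_prod_eq (f : (k : Fin m) → Fin (n k) → ℝ) :
    ∑ I : (k : Fin m) → Fin (n k), ∏ k, f k (I k) = ∏ k, ∑ i, f k i := by
  classical
  rw [Finset.prod_univ_sum, Fintype.piFinset_univ]

lemma sum_diag_rankOne (z : (k : Fin m) → Fin (n k) → ℂ) :
    (∑ I, rankOne z I I) = ((∏ k, ∑ i, Complex.normSq (z k i) : ℝ) : ℂ) := by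
  have h1 : ∀ I : (k : Fin m) → Fin (n k),
      rankOne z I I = ((∏ k, Complex.normSq (z k (I k)) : ℝ) : ℂ) := by
    intro I
    simp only [rankOne]
    push_cast
    exact Finset.prod_congr rfl fun k _ => (Complex.mul_conj _)
  rw [Finset.sum_congr rfl fun I _ => h1 I, ← Complex.ofReal_sum]
  exact congrArg _ (sum_prod_eq fun k i => Complex.normSq (z k i))

lemma exists_repr
    (f : (((k : Fin m) → Fin (n k)) → ((k : Fin m) → Fin (n k)) → ℂ) →L[ℝ] ℝ) :
    ∃ A : ((k : Fin m) → Fin (n k)) → ((k : Fin m) → Fin (n k)) → ℂ,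
      ∀ X, (ip A X).re = f X := by
  classical
  set eb : ((k : Fin m) → Fin (n k)) → ((k : Fin m) → Fin (n k)) →
      (((k : Fin m) → Fin (n k)) → ((k : Fin m) → Fin (n k)) → ℂ) :=
    fun I J I' J' => if I = I' ∧ J = J' then 1 else 0 with heb
  set ib : ((k : Fin m) → Fin (n k)) → ((k : Fin m) → Fin (n k)) →
      (((k : Fin m) → Fin (n k)) → ((k : Fin m) → Fin (n k)) → ℂ) :=
    fun I J I' J' => if I = I' ∧ J = J' then Complex.I else 0 with hib
  refine ⟨fun I J => (f (eb I J) : ℂ) + (f (ib I J) : ℂ) * Complex.I, fun X => ?_⟩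
  have hX : X = ∑ I, ∑ J, ((X I J).re • eb I J + (X I J).im • ib I J) := by
    funext I' J'
    simp only [Finset.sum_apply, Pi.add_apply, Pi.smul_apply, heb, hib, smul_ite, smul_zero]
    rw [Finset.sum_comm]
    simp only [ite_and]
    rw [Finset.sum_eq_single J', Finset.sum_eq_single I']
    · simp [Complex.real_smul, Complex.re_add_im]
    · intro I _ hI; simp [Ne.symm hI, hI]
    · simp
    · intro J _ hJ
      rw [Finset.sum_eq_zero]
      intro I _
      simp [hJ, Ne.symm hJ]
    · simp
  calc (ip (fun I J => (f (eb I J) : ℂ) + (f (ib I J) : ℂ) * Complex.I) X).re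
      = ∑ I, ∑ J, (f (eb I J) * (X I J).re + f (ib I J) * (X I J).im) := by
        simp only [ip, Complex.re_sum]
        refine Finset.sum_congr rfl fun I _ => Finset.sum_congr rfl fun J _ => ?_
        simp only [Complex.mul_re, Complex.add_re, Complex.add_im, Complex.ofReal_re,
          Complex.ofReal_im, Complex.mul_im, Complex.I_re, Complex.I_im,
          Complex.conj_re, Complex.conj_im]
        ring
    _ = ∑ I, ∑ J, f ((X I J).re • eb I J + (X I J).im • ib I J) := by
        refine Finset.sum_congr rfl fun I _ => Finset.sum_congr rfl fun J _ => ?_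
        rw [map_add, map_smul, map_smul, smul_eq_mul, smul_eq_mul]; ring
    _ = f (∑ I, ∑ J, ((X I J).re • eb I J + (X I J).im • ib I J)) := by
        rw [map_sum]
        exact Finset.sum_congr rfl fun I _ => (map_sum f _ _).symm
    _ = f X := by rw [← hX]

lemma ip_herm_re (A X : ((k : Fin m) → Fin (n k)) → ((k : Fin m) → Fin (n k)) → ℂ)
    (hX : IsHerm X) :
    (ip (fun I J => (A I J + conj (A J I)) / 2) X).re = (ip A X).re := by
  have hconjX : ∀ I J, conj (X I J) = X J I := by
    intro I J; rw [hX I J, Complex.conj_conj]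
  have h2 : (∑ I, ∑ J, conj (A J I) * conj (X I J)) = conj (ip A X) := by
    calc ∑ I, ∑ J, conj (A J I) * conj (X I J)
        = ∑ I, ∑ J, conj (A J I) * X J I := by
          refine Finset.sum_congr rfl fun I _ => Finset.sum_congr rfl fun J _ => ?_
          rw [hconjX]
      _ = ∑ J, ∑ I, conj (A J I) * X J I := Finset.sum_comm
      _ = conj (ip A X) := by
          simp only [ip, map_sum, map_mul]
          refine Finset.sum_congr rfl fun J _ => Finset.sum_congr rfl fun I _ => ?_
          rw [Complex.conj_conj]
  have expand : ip (fun I J => (A I J + conj (A J I)) / 2) X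
      = (ip A X + conj (ip A X)) / 2 := by
    rw [← h2]
    simp only [ip]
    rw [← Finset.sum_add_distrib, Finset.sum_div]
    refine Finset.sum_congr rfl fun I _ => ?_
    rw [← Finset.sum_add_distrib, Finset.sum_div]
    refine Finset.sum_congr rfl fun J _ => ?_
    ring
  rw [expand, Complex.add_conj]
  rw [show ((2:ℂ)) = ((2:ℝ):ℂ) by norm_num, ← Complex.ofReal_div, Complex.ofReal_re]
  ring

lemma ip_add_mul (B C X : ((k : Fin m) → Fin (n k)) → ((k : Fin m) → Fin (n k)) → ℂ) (c : ℂ) :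
    ip (fun I J => B I J + c * C I J) X = ip B X + c * ip C X := by
  simp only [ip, add_mul, Finset.sum_add_distrib, Finset.mul_sum, mul_assoc]


set_option maxHeartbeats 1000000 in
/-- If a Hermitian tensor is not separable, there is a positive definite Hermitian
tensor `A` with `Re⟨A, H⟩ < 0`. -/
theorem exists_pd_separating_tensor
    (m : ℕ) (hm : 1 ≤ m) (n : Fin m → ℕ) (hn : ∀ k, 1 ≤ n k)
    (H : ((k : Fin m) → Fin (n k)) → ((k : Fin m) → Fin (n k)) → ℂ)
    (hH : IsHerm H)
    (hsep : ¬ ∃ (r : ℕ) (u : (i : Fin r) → (k : Fin m) → Fin (n k) → ℂ),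
        ∀ I J, H I J = ∑ i, rankOne (u i) I J) :
    ∃ A : ((k : Fin m) → Fin (n k)) → ((k : Fin m) → Fin (n k)) → ℂ,
      IsHerm A ∧
      (∀ z : (k : Fin m) → Fin (n k) → ℂ, (∀ k, z k ≠ 0) → 0 < (ip A (rankOne z)).re) ∧
      (ip A H).re < 0 := by
  classical
  set k₀ : Fin m := ⟨0, hm⟩ with hk₀
  set Sph : Set ((k : Fin m) → Fin (n k) → ℂ) :=
    {z | ∀ k, ∑ i, Complex.normSq (z k i) = 1} with hSph
  set Bs : Set (((k : Fin m) → Fin (n k)) → ((k : Fin m) → Fin (n k)) → ℂ) :=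
    rankOne '' Sph with hBs
  set Ds := convexHull ℝ Bs with hDs
  set K : Set (((k : Fin m) → Fin (n k)) → ((k : Fin m) → Fin (n k)) → ℂ) :=
    {x | ∃ t : ℝ, 0 ≤ t ∧ ∃ c ∈ Ds, x = t • c} with hK
  -- compactness of the unit-normalized parameter set
  have hSphC : IsCompact Sph := by
    have hclosed : IsClosed Sph := by
      have hrw : Sph = ⋂ k, {z : (k : Fin m) → Fin (n k) → ℂ |
          ∑ i, Complex.normSq (z k i) = 1} := by
        ext z; simp [hSph, Set.mem_iInter]
      rw [hrw]
      refine isClosed_iInter fun k => isClosed_eq ?_ continuous_const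
      exact continuous_finset_sum _ fun i _ =>
        Complex.continuous_normSq.comp ((continuous_apply i).comp (continuous_apply k))
    have hbdd : Bornology.IsBounded Sph := by
      refine (Metric.isBounded_iff_subset_closedBall 0).2 ⟨1, fun z hz => ?_⟩
      rw [Metric.mem_closedBall, dist_zero_right]
      refine (pi_norm_le_iff_of_nonneg zero_le_one).2 fun k => ?_
      refine (pi_norm_le_iff_of_nonneg zero_le_one).2 fun i => ?_
      have h1 : Complex.normSq (z k i) ≤ 1 := by
        rw [← hz k]
        exact Finset.single_le_sum (fun j _ => Complex.normSq_nonneg _) (Finset.mem_univ i)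
      nlinarith [Complex.sq_norm (z k i), norm_nonneg (z k i)]
    exact Metric.isCompact_of_isClosed_isBounded hclosed hbdd
  have hrankCont : Continuous
      (rankOne : ((k : Fin m) → Fin (n k) → ℂ) →
        ((k : Fin m) → Fin (n k)) → ((k : Fin m) → Fin (n k)) → ℂ) := by
    refine continuous_pi fun I => continuous_pi fun J => continuous_finset_prod _ fun k _ => ?_
    have hI : Continuous fun z : (k : Fin m) → Fin (n k) → ℂ => z k (I k) :=
      (continuous_apply (I k)).comp (continuous_apply k)
    have hJ : Continuous fun z : (k : Fin m) → Fin (n k) → ℂ => z k (J k) :=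
      (continuous_apply (J k)).comp (continuous_apply k)
    exact hI.mul (Complex.continuous_conj.comp hJ)
  have hBsC : IsCompact Bs := hSphC.image hrankCont
  have hDsC : IsCompact Ds := isCompact_convexHull_of_isCompact' hBsC
  -- the trace functional
  set Flin : (((k : Fin m) → Fin (n k)) → ((k : Fin m) → Fin (n k)) → ℂ) →ₗ[ℝ] ℝ :=
    { toFun := fun X => (∑ I, X I I).re
      map_add' := by
        intro X Y
        simp [Finset.sum_add_distrib]
      map_smul' := by
        intro r X
        simp only [Pi.smul_apply, RingHom.id_apply, smul_eq_mul]
        rw [← Finset.smul_sum, Complex.smul_re, smul_eq_mul]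
    } with hFlin
  set F := LinearMap.toContinuousLinearMap Flin with hF
  have hFval : ∀ X, F X = (∑ I, X I I).re := fun X => rfl
  have hFB : ∀ b ∈ Bs, F b = 1 := by
    rintro b ⟨z, hz, rfl⟩
    rw [hFval, sum_diag_rankOne, Complex.ofReal_re]
    rw [Finset.prod_congr rfl fun k _ => hz k]
    simp
  have hFD : ∀ c ∈ Ds, F c = 1 := by
    intro c hc
    have hsub : Ds ⊆ {x | F x = 1} :=
      convexHull_min hFB (convex_hyperplane ⟨fun a b => map_add F a b, fun r a => map_smul F r a⟩ 1)
    exact hsub hc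
  have hKclosed : IsClosed K := isClosed_cone' hDsC F hFD
  have hKconvex : Convex ℝ K := convex_cone' (convex_convexHull ℝ Bs)
  -- every element of K is separable
  have hKsep : ∀ x ∈ K, ∃ (r : ℕ) (u : (i : Fin r) → (k : Fin m) → Fin (n k) → ℂ),
      ∀ I J, x I J = ∑ i, rankOne (u i) I J := by
    rintro x ⟨t, ht, c, hc, rfl⟩
    obtain ⟨ι, hι, zz, w, hrange, hai, hposw, hsum, hce⟩ :=
      eq_pos_convex_span_of_mem_convexHull hc
    have hz : ∀ i, ∃ v, v ∈ Sph ∧ rankOne v = zz i := by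
      intro i
      obtain ⟨v, hv, he⟩ := hrange ⟨i, rfl⟩
      exact ⟨v, hv, he⟩
    choose v hv hve using hz
    set e := Fintype.equivFin ι with he
    refine ⟨Fintype.card ι, fun j k =>
      ((if k = k₀ then Real.sqrt (t * w (e.symm j)) else 1 : ℝ) : ℂ) • v (e.symm j) k,
      fun I J => ?_⟩
    have hterm : ∀ i : ι,
        rankOne (fun k => ((if k = k₀ then Real.sqrt (t * w i) else 1 : ℝ) : ℂ) • v i k) I J
          = ((t * w i : ℝ) : ℂ) * rankOne (v i) I J := by
      intro i
      have hro := congrFun (congrFun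
        (rankOne_smul (fun k => if k = k₀ then Real.sqrt (t * w i) else 1) (v i)) I) J
      rw [hro]
      congr 2
      calc ∏ k, (if k = k₀ then Real.sqrt (t * w i) else 1) ^ 2
          = ∏ k, (if k = k₀ then t * w i else 1) := by
            refine Finset.prod_congr rfl fun k _ => ?_
            split
            · exact Real.sq_sqrt (mul_nonneg ht (hposw i).le)
            · exact one_pow 2
        _ = t * w i := by
            rw [Finset.prod_ite_eq' Finset.univ k₀ fun _ => t * w i]
            simp
    calc (t • c) I J = (t : ℂ) * c I J := by
          simp [Pi.smul_apply, Complex.real_smul]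
      _ = (t : ℂ) * ∑ i, (w i : ℂ) * rankOne (v i) I J := by
          rw [← hce]
          simp only [Finset.sum_apply, Pi.smul_apply]
          congr 1
          refine Finset.sum_congr rfl fun i _ => ?_
          rw [hve i, Complex.real_smul]
      _ = ∑ i, ((t * w i : ℝ) : ℂ) * rankOne (v i) I J := by
          rw [Finset.mul_sum]
          refine Finset.sum_congr rfl fun i _ => ?_
          push_cast
          ring
      _ = ∑ j : Fin (Fintype.card ι), ((t * w (e.symm j) : ℝ) : ℂ) * rankOne (v (e.symm j)) I J :=
          (Equiv.sum_comp e.symm fun i => ((t * w i : ℝ) : ℂ) * rankOne (v i) I J).symm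
      _ = _ := by
          refine Finset.sum_congr rfl fun j _ => ?_
          rw [hterm (e.symm j)]
  have hHK : H ∉ K := by
    intro hHK
    exact hsep (hKsep H hHK)
  -- separation
  obtain ⟨g, u0, hgK, hgH⟩ := geometric_hahn_banach_closed_point hKconvex hKclosed hHK
  -- an element of the sphere set
  have hSphNe : Sph.Nonempty := by
    refine ⟨fun k i => if i = (⟨0, hn k⟩ : Fin (n k)) then 1 else 0, fun k => ?_⟩
    have hns : ∀ i : Fin (n k),
        Complex.normSq (if i = (⟨0, hn k⟩ : Fin (n k)) then (1:ℂ) else 0)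
          = if i = (⟨0, hn k⟩ : Fin (n k)) then (1:ℝ) else 0 := by
      intro i; split <;> simp
    rw [Finset.sum_congr rfl fun i _ => hns i,
      Finset.sum_ite_eq' Finset.univ _ (fun _ => (1:ℝ))]
    simp
  have h0K : (0 : ((k : Fin m) → Fin (n k)) → ((k : Fin m) → Fin (n k)) → ℂ) ∈ K := by
    obtain ⟨z₀, hz₀⟩ := hSphNe
    exact ⟨0, le_refl 0, rankOne z₀, subset_convexHull ℝ Bs ⟨z₀, hz₀, rfl⟩, (zero_smul ℝ _).symm⟩
  have hu0pos : 0 < u0 := by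
    have := hgK 0 h0K
    simpa using this
  have hgKnonpos : ∀ a ∈ K, g a ≤ 0 := by
    intro a ha
    by_contra hpos
    push_neg at hpos
    have hmem : ((u0 + 1) / g a) • a ∈ K := by
      obtain ⟨t, ht, c, hc, rfl⟩ := ha
      exact ⟨(u0 + 1) / g (t • c) * t,
        mul_nonneg (div_nonneg (by linarith) hpos.le) ht, c, hc, by rw [smul_smul]⟩
    have hlt := hgK _ hmem
    rw [map_smul, smul_eq_mul, div_mul_cancel₀ _ (ne_of_gt hpos)] at hlt
    linarith
  obtain ⟨A₀, hA₀⟩ := exists_repr (-g)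
  have hA₀K : ∀ a ∈ K, 0 ≤ (ip A₀ a).re := by
    intro a ha
    rw [hA₀]
    simp only [ContinuousLinearMap.neg_apply]
    linarith [hgKnonpos a ha]
  have hA₀H : (ip A₀ H).re < 0 := by
    rw [hA₀]
    simp only [ContinuousLinearMap.neg_apply]
    linarith
  -- hermitization
  set A₁ : ((k : Fin m) → Fin (n k)) → ((k : Fin m) → Fin (n k)) → ℂ :=
    fun I J => (A₀ I J + (starRingEnd ℂ) (A₀ J I)) / 2 with hA₁
  have hA₁herm : IsHerm A₁ := by
    intro I J
    simp only [hA₁, map_div₀, map_add, Complex.conj_conj, map_ofNat]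
    ring
  -- rank-one tensors with nonzero parts lie in K
  have hrkK : ∀ z : (k : Fin m) → Fin (n k) → ℂ, (∀ k, z k ≠ 0) →
      rankOne z ∈ K ∧ 0 < ∏ k, ∑ i, Complex.normSq (z k i) := by
    intro z hz
    have hposk : ∀ k, 0 < ∑ i, Complex.normSq (z k i) := by
      intro k
      obtain ⟨i, hi⟩ := Function.ne_iff.1 (hz k)
      exact Finset.sum_pos' (fun j _ => Complex.normSq_nonneg _)
        ⟨i, Finset.mem_univ i, Complex.normSq_pos.2 hi⟩
    have hprodpos : 0 < ∏ k, ∑ i, Complex.normSq (z k i) :=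
      Finset.prod_pos fun k _ => hposk k
    refine ⟨?_, hprodpos⟩
    set a : Fin m → ℝ := fun k => ∑ i, Complex.normSq (z k i) with ha
    have hb : (fun k => (((Real.sqrt (a k))⁻¹ : ℝ) : ℂ) • z k) ∈ Sph := by
      intro k
      simp only [Pi.smul_apply, smul_eq_mul, Complex.normSq_mul, Complex.normSq_ofReal]
      rw [← Finset.mul_sum]
      have : (Real.sqrt (a k))⁻¹ * (Real.sqrt (a k))⁻¹ * a k = 1 := by
        rw [← mul_inv]
        rw [Real.mul_self_sqrt (hposk k).le]
        exact inv_mul_cancel₀ (ne_of_gt (hposk k))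
      exact this
    have hro := rankOne_smul (fun k => (Real.sqrt (a k))⁻¹) z
    have hprodinv : (∏ k, ((Real.sqrt (a k))⁻¹) ^ 2) = (∏ k, a k)⁻¹ := by
      rw [← Finset.prod_inv_distrib]
      refine Finset.prod_congr rfl fun k _ => ?_
      rw [inv_pow, Real.sq_sqrt (hposk k).le]
    refine ⟨∏ k, a k, hprodpos.le,
      rankOne (fun k => (((Real.sqrt (a k))⁻¹ : ℝ) : ℂ) • z k),
      subset_convexHull ℝ Bs ⟨_, hb, rfl⟩, ?_⟩
    funext I J
    rw [Pi.smul_apply, Pi.smul_apply]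
    rw [congrFun (congrFun hro I) J, hprodinv]
    rw [Complex.real_smul]
    push_cast
    rw [← mul_assoc, mul_inv_cancel₀ (by exact_mod_cast ne_of_gt hprodpos), one_mul]
  -- the diagonal tensor
  set Ediag : ((k : Fin m) → Fin (n k)) → ((k : Fin m) → Fin (n k)) → ℂ :=
    fun I J => if I = J then 1 else 0 with hE
  have hEherm : IsHerm Ediag := by
    intro I J
    simp only [hE]
    rw [show ((starRingEnd ℂ) (if J = I then (1:ℂ) else 0)) = if J = I then 1 else 0 by
      split <;> simp]
    simp [eq_comm]
  have hipE : ∀ X, (ip Ediag X).re = (∑ I, X I I).re := by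
    intro X
    have : ip Ediag X = (starRingEnd ℂ) (∑ I, X I I) := by
      simp only [ip, hE, ite_mul, one_mul, zero_mul, map_sum]
      exact Finset.sum_congr rfl fun I _ => by
        rw [Finset.sum_ite_eq (Finset.univ) I fun J => (starRingEnd ℂ) (X I J)]
        simp
    rw [this, Complex.conj_re]
  -- choose ε
  set β : ℝ := (ip A₁ H).re with hβdef
  have hβ : β < 0 := by
    rw [hβdef, hA₁, ip_herm_re A₀ H hH]
    exact hA₀H
  set γ : ℝ := (ip Ediag H).re with hγdef
  set ε : ℝ := -β / (2 * max γ 1) with hεdef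
  have hmax : 0 < max γ 1 := lt_of_lt_of_le one_pos (le_max_right γ 1)
  have hε : 0 < ε := div_pos (by linarith) (by linarith)
  -- the separating tensor
  refine ⟨fun I J => A₁ I J + ((ε : ℝ) : ℂ) * Ediag I J, ?_, ?_, ?_⟩
  · intro I J
    rw [map_add, map_mul, Complex.conj_ofReal, ← hA₁herm I J, ← hEherm I J]
  · intro z hz
    obtain ⟨hzK, hzpos⟩ := hrkK z hz
    rw [ip_add_mul, Complex.add_re]
    have h1 : 0 ≤ (ip A₁ (rankOne z)).re := by
      rw [hA₁, ip_herm_re A₀ _ (rankOne_herm z)]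
      exact hA₀K _ hzK
    have h2 : (((ε : ℝ) : ℂ) * ip Ediag (rankOne z)).re = ε * ∏ k, ∑ i, Complex.normSq (z k i) := by
      rw [show (((ε : ℝ) : ℂ) * ip Ediag (rankOne z)).re = ε * (ip Ediag (rankOne z)).re by
        simp [Complex.mul_re]]
      rw [hipE, sum_diag_rankOne, Complex.ofReal_re]
    rw [h2]
    nlinarith
  · rw [ip_add_mul, Complex.add_re]
    rw [show (((ε : ℝ) : ℂ) * ip Ediag H).re = ε * (ip Ediag H).re by simp [Complex.mul_re]]
    have hεγ : ε * γ ≤ -β / 2 := by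
      have h1 : ε * γ ≤ ε * max γ 1 := mul_le_mul_of_nonneg_left (le_max_left γ 1) hε.le
      have h2 : ε * max γ 1 = -β / 2 := by
        rw [hεdef]
        field_simp
      linarith
    have : (ip A₁ H).re = β := rfl
    rw [this]
    have : (ip Ediag H).re = γ := rfl
    rw [this]
    linarith

end HermitianTensorSeparatingHyperplane
end

section
/- Let H be a Hermitian tensor of format (n_1,…,n_m) and suppose the flattening tensor T(H) ∈ ℂ^{n_1² × ⋯ × n_m²} has tensor rank s and admits a decomposition T(H)_{(i_1,j_1),…,(i_m,j_m)} = Σ_{i=1}^s ∏_{k=1}^m (B_k^i)_{i_k j_k} where every B_k^i ∈ ℂ^{n_k×n_k} is a positive semidefinite Hermitian matrix. Then H is separable and its psd rank equals s. -/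
open scoped ComplexOrder

namespace HermitianTensorPsdRank

/-- The rank of an order-`m` complex tensor: the smallest number of rank-1 tensors
(outer products of vectors) summing to it. -/
noncomputable def tensorRank {m : ℕ} {ι : Fin m → Type} (T : ((j : Fin m) → ι j) → ℂ) : ℕ :=
  sInf {r | ∃ v : Fin r → (j : Fin m) → ι j → ℂ, ∀ p, T p = ∑ i, ∏ j, v i j (p j)}

variable {m : ℕ} {n : Fin m → ℕ}

/-- A Hermitian tensor is separable if it is a sum of rank-1 Hermitian tensors. -/
def IsSep (H : ((k : Fin m) → Fin (n k)) → ((k : Fin m) → Fin (n k)) → ℂ) : Prop :=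
  ∃ (r : ℕ) (u : (i : Fin r) → (k : Fin m) → Fin (n k) → ℂ),
    ∀ I J, H I J = ∑ i, ∏ k, u i k (I k) * (starRingEnd ℂ) (u i k (J k))

/-- The psd rank of a Hermitian tensor: the smallest length of a decomposition into
Kronecker products of psd Hermitian matrices. -/
noncomputable def psdRank (H : ((k : Fin m) → Fin (n k)) → ((k : Fin m) → Fin (n k)) → ℂ) : ℕ :=
  sInf {s | ∃ B : (i : Fin s) → (k : Fin m) → Matrix (Fin (n k)) (Fin (n k)) ℂ,
    (∀ i k, (B i k).PosSemidef) ∧ ∀ I J, H I J = ∑ i, ∏ k, B i k (I k) (J k)}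

/-- If the flattening tensor `T(H)` has tensor rank `s` and admits a length-`s`
decomposition by psd Hermitian matrices, then `H` is separable with psd rank `s`. -/
theorem separable_of_flattening_psd_rank_decomposition
    (m : ℕ) (hm : 1 ≤ m) (n : Fin m → ℕ) (hn : ∀ k, 1 ≤ n k)
    (H : ((k : Fin m) → Fin (n k)) → ((k : Fin m) → Fin (n k)) → ℂ)
    (hH : ∀ I J, H I J = (starRingEnd ℂ) (H J I))
    (s : ℕ)
    (hrank : tensorRank (fun p : (k : Fin m) → Fin (n k) × Fin (n k) =>
        H (fun k => (p k).1) (fun k => (p k).2)) = s)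
    (B : (i : Fin s) → (k : Fin m) → Matrix (Fin (n k)) (Fin (n k)) ℂ)
    (hpsd : ∀ i k, (B i k).PosSemidef)
    (hdec : ∀ p : (k : Fin m) → Fin (n k) × Fin (n k),
        H (fun k => (p k).1) (fun k => (p k).2) = ∑ i, ∏ k, B i k (p k).1 (p k).2) :
    IsSep H ∧ psdRank H = s := by
  classical
  have hdec' : ∀ I J, H I J = ∑ i, ∏ k, B i k (I k) (J k) := by
    intro I J
    simpa using hdec (fun k => (I k, J k))
  constructor
  · -- separability via spectral decomposition of each psd matrix
    choose A hA using fun i k =>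
      (show ∃ C : Matrix (Fin (n k)) (Fin (n k)) ℂ, B i k = Matrix.conjTranspose C * C by
        open scoped MatrixOrder in
        obtain ⟨C, hC⟩ := CStarAlgebra.nonneg_iff_eq_star_mul_self.mp (hpsd i k).nonneg
        exact ⟨C, hC⟩)
    set ι := Fin s × ((k : Fin m) → Fin (n k)) with hι
    set e := Fintype.equivFin ι with he
    refine ⟨Fintype.card ι,
      fun i k x => (starRingEnd ℂ) (A (e.symm i).1 k ((e.symm i).2 k) x), ?_⟩
    intro I J
    have key : ∀ (i : Fin s) (k : Fin m),
        B i k (I k) (J k) = ∑ l, (starRingEnd ℂ) (A i k l (I k)) * A i k l (J k) := by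
      intro i k
      rw [hA i k, Matrix.mul_apply]
      simp [Matrix.conjTranspose_apply, mul_comm]
    calc H I J = ∑ i, ∏ k, B i k (I k) (J k) := hdec' I J
      _ = ∑ i : Fin s, ∏ k, ∑ l, (starRingEnd ℂ) (A i k l (I k)) * A i k l (J k) := by
          simp_rw [key]
      _ = ∑ i : Fin s, ∑ L ∈ Fintype.piFinset (fun k : Fin m => (Finset.univ : Finset (Fin (n k)))),
            ∏ k, (starRingEnd ℂ) (A i k (L k) (I k)) * A i k (L k) (J k) := by
          simp_rw [Finset.prod_univ_sum]
      _ = ∑ p : ι, ∏ k, (starRingEnd ℂ) (A p.1 k (p.2 k) (I k)) * A p.1 k (p.2 k) (J k) := by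
          rw [Fintype.sum_prod_type]
          rfl
      _ = ∑ i : Fin (Fintype.card ι),
            ∏ k, (starRingEnd ℂ) (A (e.symm i).1 k ((e.symm i).2 k) (I k))
              * A (e.symm i).1 k ((e.symm i).2 k) (J k) := by
          rw [← Equiv.sum_comp e.symm
            (fun p : ι => ∏ k, (starRingEnd ℂ) (A p.1 k (p.2 k) (I k)) * A p.1 k (p.2 k) (J k))]
      _ = _ := by simp
  · -- psd rank equals s
    have hs_mem : s ∈ {t | ∃ B' : (i : Fin t) → (k : Fin m) → Matrix (Fin (n k)) (Fin (n k)) ℂ,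
        (∀ i k, (B' i k).PosSemidef) ∧ ∀ I J, H I J = ∑ i, ∏ k, B' i k (I k) (J k)} :=
      ⟨B, hpsd, hdec'⟩
    refine le_antisymm (Nat.sInf_le hs_mem) (le_csInf ⟨s, hs_mem⟩ ?_)
    rintro t ⟨B', _, hd'⟩
    rw [← hrank]
    apply Nat.sInf_le
    refine ⟨fun i k q => B' i k q.1 q.2, fun p => ?_⟩
    simpa using hd' (fun k => (p k).1) (fun k => (p k).2)

end HermitianTensorPsdRank
end

section
/- Let H be a Hermitian tensor of format (n_1,…,n_m) that is ℝ-Hermitian decomposable, i.e., there exist r ≥ 0, real scalars λ_i ∈ ℝ, and real vectors u_i^j ∈ ℝ^{n_j} with H = Σ_{i=1}^r λ_i [u_i^1,…,u_i^m]_⊗h (in particular all entries of H are real). Then H is ℝ-separable, meaning H = Σ_{i=1}^{r'} [v_i^1,…,v_i^m]_⊗h for some real vectors v_i^j ∈ ℝ^{n_j}, if and only if H is ℂ-separable, meaning H = Σ_{i=1}^{r''} [w_i^1,…,w_i^m]_⊗h for some complex vectors w_i^j ∈ ℂ^{n_j}. -/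
/-- For an ℝ-Hermitian decomposable tensor (a real linear combination of rank-1
Hermitian tensors of real vectors), ℝ-separability is equivalent to ℂ-separability. -/
theorem real_separable_iff_complex_separable
    (m : ℕ) (hm : 1 ≤ m) (n : Fin m → ℕ) (hn : ∀ k, 1 ≤ n k)
    (H : ((k : Fin m) → Fin (n k)) → ((k : Fin m) → Fin (n k)) → ℂ)
    (r : ℕ) (lam : Fin r → ℝ) (u : (i : Fin r) → (k : Fin m) → Fin (n k) → ℝ)
    (hdec : ∀ I J, H I J = ∑ i, (lam i : ℂ) *
        ∏ k, (u i k (I k) : ℂ) * (u i k (J k) : ℂ)) :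
    (∃ (r' : ℕ) (v : (i : Fin r') → (k : Fin m) → Fin (n k) → ℝ),
        ∀ I J, H I J = ∑ i, ∏ k, (v i k (I k) : ℂ) * (v i k (J k) : ℂ))
      ↔
    (∃ (r'' : ℕ) (w : (i : Fin r'') → (k : Fin m) → Fin (n k) → ℂ),
        ∀ I J, H I J = ∑ i, ∏ k, w i k (I k) * (starRingEnd ℂ) (w i k (J k))) := by
  constructor
  · rintro ⟨r', v, hv⟩
    refine ⟨r', fun i k j => (v i k j : ℂ), fun I J => ?_⟩
    rw [hv I J]
    refine Finset.sum_congr rfl fun i _ => Finset.prod_congr rfl fun k _ => ?_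
    simp [Complex.conj_ofReal]
  · rintro ⟨r'', w, hw⟩
    -- partial swap symmetry of H
    have hswap : ∀ (ε : Fin m → Bool) I J,
        H (fun k => if ε k then J k else I k) (fun k => if ε k then I k else J k)
          = H I J := by
      intro ε I J
      rw [hdec, hdec]
      refine Finset.sum_congr rfl fun i _ => ?_
      congr 1
      refine Finset.prod_congr rfl fun k _ => ?_
      cases ε k <;> simp <;> ring
    -- real/imaginary parts
    set x : Fin r'' → Bool → (k : Fin m) → Fin (n k) → ℝ :=
      fun a b k j => if b then (w a k j).im else (w a k j).re with hx
    have key : ∀ I J, (2:ℂ)^m * H I J =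
        (2:ℂ)^m * ∑ a : Fin r'', ∑ s : Fin m → Bool,
          ∏ k, (x a (s k) k (I k) : ℂ) * (x a (s k) k (J k) : ℂ) := by
      intro I J
      have h1 : (2:ℂ)^m * H I J = ∑ ε : Fin m → Bool,
          H (fun k => if ε k then J k else I k) (fun k => if ε k then I k else J k) := by
        simp only [hswap]
        simp [Finset.card_univ, mul_comm]
      rw [h1]
      have h2 : ∀ ε : Fin m → Bool,
          H (fun k => if ε k then J k else I k) (fun k => if ε k then I k else J k)
            = ∑ a : Fin r'', ∏ k,
              (if ε k then w a k (J k) * (starRingEnd ℂ) (w a k (I k))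
               else w a k (I k) * (starRingEnd ℂ) (w a k (J k))) := by
        intro ε
        rw [hw]
        refine Finset.sum_congr rfl fun a _ => Finset.prod_congr rfl fun k _ => ?_
        cases ε k <;> simp
      simp only [h2]
      rw [Finset.sum_comm]
      rw [Finset.mul_sum]
      refine Finset.sum_congr rfl fun a _ => ?_
      -- now: ∑ ε, ∏ k, g k (ε k) = 2^m * ∑ s, ∏ k, ...
      have h3 : (∑ ε : Fin m → Bool, ∏ k,
          (if ε k then w a k (J k) * (starRingEnd ℂ) (w a k (I k))
           else w a k (I k) * (starRingEnd ℂ) (w a k (J k))))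
          = ∏ k, ∑ b : Bool,
            (if b then w a k (J k) * (starRingEnd ℂ) (w a k (I k))
             else w a k (I k) * (starRingEnd ℂ) (w a k (J k))) := by
        rw [Finset.prod_univ_sum]
        rw [← Fintype.piFinset_univ]
      rw [h3]
      have h4 : ∀ k : Fin m, (∑ b : Bool,
          (if b then w a k (J k) * (starRingEnd ℂ) (w a k (I k))
           else w a k (I k) * (starRingEnd ℂ) (w a k (J k))))
          = 2 * ∑ b : Bool, (x a b k (I k) : ℂ) * (x a b k (J k) : ℂ) := by
        intro k
        simp only [Fintype.sum_bool, if_true, if_false, hx]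
        apply Complex.ext <;>
          simp [Complex.mul_re, Complex.mul_im, Complex.add_re, Complex.add_im] <;> ring
      simp only [h4]
      rw [Finset.prod_mul_distrib, Finset.prod_const, Finset.card_univ, Fintype.card_fin]
      congr 1
      rw [Finset.prod_univ_sum, ← Fintype.piFinset_univ]
    -- cancel 2^m and reindex
    have h2m : ((2:ℂ)^m) ≠ 0 := pow_ne_zero m two_ne_zero
    have hcard : Fintype.card (Fin r'' × (Fin m → Bool)) = r'' * 2 ^ m := by
      simp
    let e : Fin (r'' * 2 ^ m) ≃ (Fin r'' × (Fin m → Bool)) :=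
      (Fintype.equivFinOfCardEq hcard).symm
    refine ⟨r'' * 2 ^ m, fun i k => x (e i).1 ((e i).2 k) k, fun I J => ?_⟩
    have := key I J
    have hHIJ : H I J = ∑ a : Fin r'', ∑ s : Fin m → Bool,
        ∏ k, (x a (s k) k (I k) : ℂ) * (x a (s k) k (J k) : ℂ) :=
      mul_left_cancel₀ h2m this
    set F : Fin r'' × (Fin m → Bool) → ℂ := fun p =>
      ∏ k, (x p.1 (p.2 k) k (I k) : ℂ) * (x p.1 (p.2 k) k (J k) : ℂ) with hF
    have h6 : H I J = ∑ p : Fin r'' × (Fin m → Bool), F p := by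
      rw [hHIJ]; exact (Fintype.sum_prod_type (f := F)).symm
    rw [h6]
    exact (Fintype.sum_equiv e (fun i => F (e i)) F fun i => rfl).symm
end
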